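/- arXiv:1205.1778 — 3 statements merged into one kernel-verified Lean document; each statement's English description precedes it below -/
import Mathlib

section
/- For every integer k ≥ 3 and every odd positive integer n, the number of alternating permutations of length n avoiding 12⋯k is at least the number of alternating permutations of length n avoiding 12⋯(k-2)k(k-1). -/
open Function

def Contains {n k : ℕ} (p : Fin n → Fin n) (q : Fin k → Fin k) : Prop :=
  ∃ f : Fin k → Fin n, StrictMono f ∧ ∀ a b : Fin k, q a < q b ↔ p (f a) < p (f b)

def Avoids {n k : ℕ} (p : Fin n → Fin n) (q : Fin k → Fin k) : Prop :=
  ¬ Contains p q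

noncomputable def rank {n : ℕ} (p : Fin n → Fin n) (i : Fin n) : ℕ :=
  sSup {m | ∃ f : Fin m → Fin n, StrictMono f ∧ StrictMono (p ∘ f) ∧
    ∃ hm : 0 < m, f ⟨m - 1, Nat.sub_lt hm Nat.one_pos⟩ = i}

noncomputable def corank {n : ℕ} (p : Fin n → Fin n) (i : Fin n) : ℕ :=
  sSup {m | ∃ f : Fin m → Fin n, StrictMono f ∧ StrictMono (p ∘ f) ∧
    ∃ hm : 0 < m, f ⟨0, hm⟩ = i}

def Alternating {n : ℕ} (p : Fin n → Fin n) : Prop :=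
  ∀ (i : ℕ) (h : i + 1 < n), p ⟨i, by omega⟩ < p ⟨i + 1, h⟩ ↔ i % 2 = 0

def IsPeak {n : ℕ} (p : Fin n → Fin n) (i : Fin n) : Prop :=
  (∀ _ : 0 < i.1, p ⟨i.1 - 1, lt_of_le_of_lt (Nat.sub_le _ _) i.2⟩ < p i) ∧
  (∀ h : i.1 + 1 < n, p ⟨i.1 + 1, h⟩ < p i)

def IsValley {n : ℕ} (p : Fin n → Fin n) (i : Fin n) : Prop :=
  (∀ _ : 0 < i.1, p i < p ⟨i.1 - 1, lt_of_le_of_lt (Nat.sub_le _ _) i.2⟩) ∧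
  (∀ h : i.1 + 1 < n, p i < p ⟨i.1 + 1, h⟩)

namespace AltP

variable {n k : ℕ}

def RkSet (p : Fin n → Fin n) (i : Fin n) : Set ℕ :=
  {m | ∃ f : Fin m → Fin n, StrictMono f ∧ StrictMono (p ∘ f) ∧
    ∃ hm : 0 < m, f ⟨m - 1, Nat.sub_lt hm Nat.one_pos⟩ = i}

lemma rank_def (p : Fin n → Fin n) (i : Fin n) : rank p i = sSup (RkSet p i) := rfl

lemma one_mem (p : Fin n → Fin n) (i : Fin n) : 1 ∈ RkSet p i := by
  refine ⟨fun _ => i, ?_, ?_, Nat.one_pos, rfl⟩ <;>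
  · intro a b hab
    exact absurd (Subsingleton.elim a b) (ne_of_lt hab)

lemma mem_le {p : Fin n → Fin n} {i : Fin n} {m : ℕ} (h : m ∈ RkSet p i) : m ≤ n := by
  obtain ⟨f, hf, -, -⟩ := h
  simpa using Fintype.card_le_of_injective f hf.injective

lemma bddA (p : Fin n → Fin n) (i : Fin n) : BddAbove (RkSet p i) :=
  ⟨n, fun _ hm => mem_le hm⟩

lemma rank_mem (p : Fin n → Fin n) (i : Fin n) : rank p i ∈ RkSet p i :=
  Nat.sSup_mem ⟨1, one_mem p i⟩ (bddA p i)

lemma le_rank {p : Fin n → Fin n} {i : Fin n} {m : ℕ} (h : m ∈ RkSet p i) : m ≤ rank p i :=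
  le_csSup (bddA p i) h

lemma one_le_rank (p : Fin n → Fin n) (i : Fin n) : 1 ≤ rank p i := le_rank (one_mem p i)

lemma snoc_sm {m : ℕ} {α : Type*} [Preorder α] {f : Fin m → α} (hf : StrictMono f) {j : α}
    (hj : ∀ t, f t < j) : StrictMono (Fin.snoc f j : Fin (m+1) → α) := by
  intro a b hab
  induction b using Fin.lastCases with
  | last =>
    have ha : a ≠ Fin.last m := ne_of_lt hab
    obtain ⟨a', rfl⟩ := Fin.exists_castSucc_eq.mpr ha
    simpa using hj a'
  | cast b' =>
    have ha : a ≠ Fin.last m := by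
      intro h
      exact absurd (h ▸ hab) (not_lt.mpr (Fin.castSucc_lt_last b').le)
    obtain ⟨a', rfl⟩ := Fin.exists_castSucc_eq.mpr ha
    simpa using hf (Fin.castSucc_lt_castSucc_iff.mp hab)

lemma snoc_mem {p : Fin n → Fin n} {i j : Fin n} {m : ℕ} (hm : m ∈ RkSet p i)
    (hij : i < j) (hpij : p i < p j) : m + 1 ∈ RkSet p j := by
  obtain ⟨f, hf, hpf, h0, hlast⟩ := hm
  have hfi : ∀ t, f t ≤ i := by
    intro t
    rw [← hlast]
    apply hf.monotone
    rw [Fin.le_def]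
    simp only []
    omega
  have hfj : ∀ t, f t < j := fun t => lt_of_le_of_lt (hfi t) hij
  have hpfj : ∀ t, p (f t) < p j := by
    intro t
    rcases lt_or_eq_of_le (hfi t) with h | h
    · calc p (f t) = (p ∘ f) t := rfl
        _ ≤ (p ∘ f) ⟨m-1, Nat.sub_lt h0 Nat.one_pos⟩ := by
            apply hpf.monotone
            rw [Fin.le_def]
            simp only []
            omega
        _ = p i := by simp [hlast]
        _ < p j := hpij
    · rw [h]; exact hpij
  refine ⟨Fin.snoc f j, snoc_sm hf hfj, ?_, Nat.succ_pos m, ?_⟩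
  · rw [Fin.comp_snoc]
    exact snoc_sm hpf hpfj
  · have : (⟨m + 1 - 1, Nat.sub_lt (Nat.succ_pos m) Nat.one_pos⟩ : Fin (m+1)) = Fin.last m := by
      ext; simp
    rw [this, Fin.snoc_last]

lemma rank_lt {p : Fin n → Fin n} {i j : Fin n} (hij : i < j) (hpij : p i < p j) :
    rank p i < rank p j := by
  have h := le_rank (snoc_mem (rank_mem p i) hij hpij)
  omega

lemma exists_pred {p : Fin n → Fin n} {j : Fin n} (h2 : 2 ≤ rank p j) :
    ∃ i, i < j ∧ p i < p j ∧ rank p i = rank p j - 1 := by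
  obtain ⟨f, hf, hpf, h0, hlast⟩ := rank_mem p j
  have h21 : (⟨rank p j - 2, by omega⟩ : Fin (rank p j)) < ⟨rank p j - 1, Nat.sub_lt h0 Nat.one_pos⟩ := by
    rw [Fin.mk_lt_mk]; omega
  have hij : f ⟨rank p j - 2, by omega⟩ < j := by
    have h3 := hf h21; rwa [hlast] at h3
  have hpij : p (f ⟨rank p j - 2, by omega⟩) < p j := by
    have h3 := hpf h21
    simp only [Function.comp_apply] at h3
    rwa [hlast] at h3
  refine ⟨f ⟨rank p j - 2, by omega⟩, hij, hpij, ?_⟩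
  have hub := rank_lt hij hpij
  have hlb : rank p j - 1 ∈ RkSet p (f ⟨rank p j - 2, by omega⟩) := by
    refine ⟨f ∘ Fin.castLE (by omega : rank p j - 1 ≤ rank p j),
      hf.comp (Fin.strictMono_castLE _), hpf.comp (Fin.strictMono_castLE _), by omega, ?_⟩
    simp only [Function.comp_apply]
    congr 1
    all_goals (rw [Fin.ext_iff]; simp only [Fin.coe_castLE]; omega)
  have := le_rank hlb
  omega

lemma exists_exact {p : Fin n → Fin n} :
    ∀ (R : ℕ) (j : Fin n), rank p j = R → ∀ m, 1 ≤ m → m < R →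
      ∃ i, i < j ∧ p i < p j ∧ rank p i = m := by
  intro R
  induction R using Nat.strong_induction_on with
  | _ R ih =>
    intro j hR m hm1 hmR
    obtain ⟨i, hij, hpij, hri⟩ := exists_pred (p := p) (j := j) (by omega)
    rcases eq_or_lt_of_le (show m ≤ rank p i by omega) with h | h
    · exact ⟨i, hij, hpij, h.symm⟩
    · obtain ⟨i', hi', hpi', hri'⟩ := ih (rank p i) (by omega) i rfl m hm1 h
      exact ⟨i', hi'.trans hij, hpi'.trans hpij, hri'⟩

lemma exists_exactChain {p : Fin n → Fin n} :
    ∀ (m : ℕ) (j : Fin n), m < rank p j →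
      ∃ w : Fin m → Fin n, StrictMono w ∧ StrictMono (p ∘ w) ∧
        (∀ t, w t < j) ∧ (∀ t, p (w t) < p j) ∧ (∀ t : Fin m, rank p (w t) = t.1 + 1) := by
  intro m
  induction m with
  | zero =>
    intro j _
    exact ⟨Fin.elim0, fun a => a.elim0, fun a => a.elim0, fun a => a.elim0,
      fun a => a.elim0, fun a => a.elim0⟩
  | succ m ih =>
    intro j hm
    obtain ⟨i, hij, hpij, hri⟩ := exists_exact (rank p j) j rfl (m+1) (by omega) hm
    obtain ⟨w', hw', hpw', hlt', hplt', hrk'⟩ := ih i (by omega)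
    refine ⟨Fin.snoc w' i, snoc_sm hw' hlt', ?_, ?_, ?_, ?_⟩
    · rw [Fin.comp_snoc]; exact snoc_sm hpw' hplt'
    · intro t
      induction t using Fin.lastCases with
      | last => simpa using hij
      | cast t' => simpa using (hlt' t').trans hij
    · intro t
      induction t using Fin.lastCases with
      | last => simpa using hpij
      | cast t' =>
        simp only [Fin.snoc_castSucc]
        exact (hplt' t').trans hpij
    · intro t
      induction t using Fin.lastCases with
      | last => simpa using hri
      | cast t' => simpa using hrk' t'

lemma mkOcc (hk : 3 ≤ k) {p : Fin n → Fin n} {w : Fin (k-2) → Fin n}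
    (hw : StrictMono w) (hpw : StrictMono (p ∘ w)) {x y : Fin n}
    (hwx : ∀ t, w t < x) (hpwy : ∀ t, p (w t) < p y) (hxy : x < y) (hpyx : p y < p x) :
    Contains p (⇑(Equiv.swap (⟨k - 2, Nat.sub_lt (by omega) (by omega)⟩ : Fin k) ⟨k - 1, Nat.sub_lt (by omega) (by omega)⟩)) := by
  set i2 : Fin k := ⟨k - 2, by omega⟩ with hi2
  set i1 : Fin k := ⟨k - 1, by omega⟩ with hi1
  have hpwx : ∀ t, p (w t) < p x := fun t => (hpwy t).trans hpyx
  refine ⟨fun a => if h : a.1 < k - 2 then w ⟨a.1, h⟩ else if a.1 = k - 2 then x else y, ?_, ?_⟩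
  · intro a b hab
    rcases lt_trichotomy (b.1 : ℕ) (k-2) with hb | hb | hb
    · have ha : a.1 < k - 2 := lt_trans hab hb
      simp only [dif_pos ha, dif_pos hb]
      exact hw (by rw [Fin.mk_lt_mk]; exact hab)
    · have ha : a.1 < k - 2 := by have := Fin.lt_def.mp hab; omega
      simp only [dif_pos ha, dif_neg (by omega : ¬ (b.1 < k - 2)), if_pos hb]
      exact hwx _
    · have hb1 : b.1 = k - 1 := by have := b.2; omega
      rcases lt_trichotomy (a.1 : ℕ) (k-2) with ha | ha | ha
      · simp only [dif_pos ha, dif_neg (by omega : ¬ (b.1 < k - 2)),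
          if_neg (by omega : ¬ (b.1 = k - 2))]
        exact (hwx _).trans hxy
      · simp only [dif_neg (by omega : ¬ (a.1 < k - 2)), if_pos ha,
          dif_neg (by omega : ¬ (b.1 < k - 2)), if_neg (by omega : ¬ (b.1 = k - 2))]
        exact hxy
      · have := a.2; have := Fin.lt_def.mp hab; omega
  · intro a b
    have hval2 : (i2 : Fin k).1 = k - 2 := by rw [hi2]
    have hval1 : (i1 : Fin k).1 = k - 1 := by rw [hi1]
    have sv : ∀ c : Fin k, ((Equiv.swap i2 i1) c).1 =
        if c.1 = k - 2 then k - 1 else if c.1 = k - 1 then k - 2 else c.1 := by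
      intro c
      by_cases h2 : c = i2
      · rw [h2, Equiv.swap_apply_left, hval1, hval2, if_pos rfl]
      · by_cases h1 : c = i1
        · rw [h1, Equiv.swap_apply_right, hval2, hval1, if_neg (by omega), if_pos rfl]
        · have hc2 : c.1 ≠ k - 2 := fun h => h2 (by rw [Fin.ext_iff, hval2]; exact h)
          have hc1 : c.1 ≠ k - 1 := fun h => h1 (by rw [Fin.ext_iff, hval1]; exact h)
          rw [Equiv.swap_apply_of_ne_of_ne h2 h1, if_neg hc2, if_neg hc1]
    rw [Fin.lt_def, sv a, sv b]
    rcases lt_trichotomy (a.1 : ℕ) (k-2) with ha | ha | ha <;>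
      rcases lt_trichotomy (b.1 : ℕ) (k-2) with hb | hb | hb
    · rw [if_neg (by omega), if_neg (by omega), if_neg (by omega), if_neg (by omega)]
      simp only [dif_pos ha, dif_pos hb]
      constructor
      · intro h; exact hpw (show (⟨a.1, ha⟩ : Fin (k-2)) < ⟨b.1, hb⟩ by rw [Fin.mk_lt_mk]; exact h)
      · intro h
        have h2 := hpw.lt_iff_lt (a := (⟨a.1, ha⟩ : Fin (k-2))) (b := ⟨b.1, hb⟩)
        rw [Fin.mk_lt_mk] at h2
        exact h2.mp h
    · rw [if_neg (by omega), if_neg (by omega), if_pos hb]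
      simp only [dif_pos ha, dif_neg (show ¬ (b.1 < k-2) by omega), if_pos hb]
      exact iff_of_true (by omega) (hpwx _)
    · have hb1 : b.1 = k - 1 := by have := b.2; omega
      rw [if_neg (by omega), if_neg (by omega), if_neg (by omega), if_pos hb1]
      simp only [dif_pos ha, dif_neg (show ¬ (b.1 < k-2) by omega),
        if_neg (show ¬ (b.1 = k-2) by omega)]
      exact iff_of_true (by omega) (hpwy _)
    · rw [if_pos ha, if_neg (by omega), if_neg (by omega)]
      simp only [dif_neg (show ¬ (a.1 < k-2) by omega), if_pos ha, dif_pos hb]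
      exact iff_of_false (by omega) (not_lt.mpr (hpwx _).le)
    · rw [if_pos ha, if_pos hb]
      simp only [dif_neg (show ¬ (a.1 < k-2) by omega), if_pos ha,
        dif_neg (show ¬ (b.1 < k-2) by omega), if_pos hb]
      exact iff_of_false (by omega) (lt_irrefl _)
    · have hb1 : b.1 = k - 1 := by have := b.2; omega
      rw [if_pos ha, if_neg (by omega), if_pos hb1]
      simp only [dif_neg (show ¬ (a.1 < k-2) by omega), if_pos ha,
        dif_neg (show ¬ (b.1 < k-2) by omega), if_neg (show ¬ (b.1 = k-2) by omega)]
      exact iff_of_false (by omega) (not_lt.mpr hpyx.le)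
    · have ha1 : a.1 = k - 1 := by have := a.2; omega
      rw [if_neg (by omega), if_pos ha1, if_neg (by omega), if_neg (by omega)]
      simp only [dif_neg (show ¬ (a.1 < k-2) by omega), if_neg (show ¬ (a.1 = k-2) by omega),
        dif_pos hb]
      exact iff_of_false (by omega) (not_lt.mpr (hpwy _).le)
    · have ha1 : a.1 = k - 1 := by have := a.2; omega
      rw [if_neg (by omega), if_pos ha1, if_pos hb]
      simp only [dif_neg (show ¬ (a.1 < k-2) by omega), if_neg (show ¬ (a.1 = k-2) by omega),
        dif_neg (show ¬ (b.1 < k-2) by omega), if_pos hb]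
      exact iff_of_true (by omega) hpyx
    · have ha1 : a.1 = k - 1 := by have := a.2; omega
      have hb1 : b.1 = k - 1 := by have := b.2; omega
      rw [if_neg (by omega), if_pos ha1, if_neg (by omega), if_pos hb1]
      refine iff_of_false (by omega) ?_
      rw [show a = b by rw [Fin.ext_iff]; omega]
      exact lt_irrefl _

noncomputable def Big (k : ℕ) (p : Fin n → Fin n) : Finset (Fin n) :=
  Finset.univ.filter (fun i => k - 1 ≤ rank p i)

lemma mem_Big {p : Fin n → Fin n} {i : Fin n} : i ∈ Big k p ↔ k - 1 ≤ rank p i := by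
  simp [Big]

lemma flip_lt {p : Fin n → Fin n} (hp : Function.Injective p) {i j : Fin n}
    (hij : i ≠ j) (h : ¬ p i < p j) : p j < p i :=
  lt_of_le_of_ne (not_lt.mp h) (hp.ne_iff.mpr hij.symm)

lemma alt_down {p : Fin n → Fin n} (halt : Alternating p) (hp : Function.Injective p)
    {i : ℕ} (h : i + 1 < n) (ho : i % 2 = 1) :
    p ⟨i + 1, h⟩ < p ⟨i, by omega⟩ := by
  apply flip_lt hp
  · intro he; rw [Fin.ext_iff] at he; simp at he
  · intro hlt
    have := (halt i h).mp hlt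
    omega

lemma alt_down' {p : Fin n → Fin n} (halt : Alternating p) (hp : Function.Injective p)
    {i j : ℕ} (hj : j < n) (hi : i < n) (hij : j = i + 1) (ho : i % 2 = 1) :
    p ⟨j, hj⟩ < p ⟨i, hi⟩ := by
  subst hij
  exact alt_down halt hp hj ho

lemma alt_up {p : Fin n → Fin n} (halt : Alternating p)
    {i : ℕ} (h : i + 1 < n) (he : i % 2 = 0) :
    p ⟨i, by omega⟩ < p ⟨i + 1, h⟩ := (halt i h).mpr he

section Struct

variable {p : Fin n → Fin n} (hk : 3 ≤ k) (hp : Function.Injective p)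
  (halt : Alternating p) (hn : Odd n)
  (hav : Avoids p (⇑(Equiv.swap (⟨k - 2, Nat.sub_lt (by omega) (by omega)⟩ : Fin k) ⟨k - 1, Nat.sub_lt (by omega) (by omega)⟩)))

include hk

lemma big_pos {b : Fin n} (hb : b ∈ Big k p) : 1 ≤ b.1 := by
  obtain ⟨i, hib, -, -⟩ := exists_pred (p := p) (j := b) (by have := mem_Big.mp hb; omega)
  have := Fin.lt_def.mp hib
  omega

include hp halt hav

lemma big_odd {b : Fin n} (hb : b ∈ Big k p) : b.1 % 2 = 1 := by
  by_contra hodd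
  have h1 : 1 ≤ b.1 := big_pos hk hb
  have h2 : 2 ≤ b.1 := by omega
  obtain ⟨w, hw, hpw, hlt, hplt, -⟩ :=
    exists_exactChain (p := p) (k-2) b (by have := mem_Big.mp hb; omega)
  have hx : (b.1 - 1) + 1 < n := by have := b.2; omega
  have hdown : p ⟨(b.1 - 1) + 1, hx⟩ < p ⟨b.1 - 1, by omega⟩ :=
    alt_down halt hp hx (by omega)
  have hbeq : (⟨(b.1 - 1) + 1, hx⟩ : Fin n) = b := by rw [Fin.ext_iff]; simp; omega
  rw [hbeq] at hdown
  apply hav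
  refine mkOcc hk hw hpw (x := ⟨b.1 - 1, by omega⟩) (y := b) ?_ hplt ?_ hdown
  · intro t
    have h3 := hlt t
    have h4 : w t ≠ ⟨b.1 - 1, by omega⟩ := by
      intro he
      have h6 := hplt t
      rw [he] at h6
      exact absurd h6 (not_lt.mpr hdown.le)
    rw [Fin.lt_def] at h3 ⊢
    have h5 := Fin.ext_iff.not.mp h4
    simp at h5 ⊢
    omega
  · rw [Fin.lt_def]; simp; omega

include hn

lemma big_succ_lt {b : Fin n} (hb : b ∈ Big k p) : b.1 + 1 < n := by
  have ho := big_odd hk hp halt hav hb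
  have := b.2
  obtain ⟨t, rfl⟩ := hn
  omega

lemma peak_right {b : Fin n} (hb : b ∈ Big k p) :
    p ⟨b.1 + 1, big_succ_lt hk hp halt hn hav hb⟩ < p b := by
  have ho := big_odd hk hp halt hav hb
  have h := alt_down halt hp (big_succ_lt hk hp halt hn hav hb) ho
  have hbeq : (⟨b.1, by omega⟩ : Fin n) = b := by rw [Fin.ext_iff]
  rwa [hbeq] at h

omit hn in
lemma peak_left {b : Fin n} (hb : b ∈ Big k p) :
    p ⟨b.1 - 1, by have := b.2; omega⟩ < p b := by
  have ho := big_odd hk hp halt hav hb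
  have h1 := big_pos hk hb
  have hx : (b.1 - 1) + 1 < n := by have := b.2; omega
  have h := alt_up halt hx (by omega)
  have hbeq : (⟨(b.1 - 1) + 1, hx⟩ : Fin n) = b := by rw [Fin.ext_iff]; simp; omega
  rwa [hbeq] at h

omit hk hp halt hn hav in
lemma exists_chain_ending {b : Fin n} {m : ℕ} (hm1 : 1 ≤ m) (hm : m ≤ rank p b) :
    ∃ w : Fin m → Fin n, StrictMono w ∧ StrictMono (p ∘ w) ∧
      (∀ t, w t ≤ b) ∧ (∀ t, p (w t) ≤ p b) := by
  obtain ⟨m', rfl⟩ : ∃ m', m = m' + 1 := ⟨m - 1, by omega⟩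
  obtain ⟨w', hw', hpw', hlt', hplt', -⟩ := exists_exactChain (p := p) m' b (by omega)
  refine ⟨Fin.snoc w' b, snoc_sm hw' hlt', ?_, ?_, ?_⟩
  · rw [Fin.comp_snoc]; exact snoc_sm hpw' hplt'
  · intro t
    induction t using Fin.lastCases with
    | last => simp
    | cast t' => simpa using (hlt' t').le
  · intro t
    induction t using Fin.lastCases with
    | last => simp
    | cast t' => simpa using (hplt' t').le

lemma claimE_right {b b' : Fin n} (hb : b ∈ Big k p) (hb' : b' ∈ Big k p) (hle : b' ≤ b) :
    p ⟨b.1 + 1, big_succ_lt hk hp halt hn hav hb⟩ < p b' := by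
  rcases eq_or_lt_of_le hle with rfl | hlt
  · exact peak_right hk hp halt hn hav hb
  · by_contra hcon
    have hne : b' ≠ ⟨b.1 + 1, big_succ_lt hk hp halt hn hav hb⟩ := by
      rw [Fin.ne_iff_vne]
      have := Fin.lt_def.mp hlt
      simp
      omega
    have h2 : p b' < p ⟨b.1 + 1, big_succ_lt hk hp halt hn hav hb⟩ := flip_lt hp hne.symm hcon
    obtain ⟨w, hw, hpw, hle2, hple2⟩ :=
      exists_chain_ending (p := p) (b := b') (m := k - 2) (by omega)
        (by have := mem_Big.mp hb'; omega)
    apply hav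
    refine mkOcc hk hw hpw (x := b) (y := ⟨b.1 + 1, big_succ_lt hk hp halt hn hav hb⟩)
      (fun t => lt_of_le_of_lt (hle2 t) hlt)
      (fun t => lt_of_le_of_lt (hple2 t) h2)
      (by rw [Fin.lt_def]; simp)
      (peak_right hk hp halt hn hav hb)

lemma claimE_left {b b' : Fin n} (hb : b ∈ Big k p) (hb' : b' ∈ Big k p) (hle : b' ≤ b) :
    p ⟨b.1 - 1, by have := b.2; omega⟩ < p b' := by
  rcases eq_or_lt_of_le hle with rfl | hlt
  · exact peak_left hk hp halt hav hb
  · have hob := big_odd hk hp halt hav hb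
    have hob' := big_odd hk hp halt hav hb'
    have hvlt : b'.1 < b.1 := Fin.lt_def.mp hlt
    have h1' : 1 ≤ b'.1 := big_pos hk hb'
    have hb3 : 3 ≤ b.1 := by omega
    by_cases hcase : b'.1 = b.1 - 2
    · have heq : (⟨b'.1 + 1, by have := b.2; omega⟩ : Fin n) = ⟨b.1 - 1, by have := b.2; omega⟩ := by
        rw [Fin.ext_iff]; simp; omega
      have hpr := peak_right hk hp halt hn hav hb'
      rw [heq] at hpr
      exact hpr
    · have hvle : b'.1 < b.1 - 2 := by omega
      by_contra hcon
      have hne : b' ≠ ⟨b.1 - 1, by have := b.2; omega⟩ := by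
        rw [Fin.ne_iff_vne]; simp; omega
      have h2 : p b' < p ⟨b.1 - 1, by have := b.2; omega⟩ := flip_lt hp hne.symm hcon
      obtain ⟨w, hw, hpw, hle2, hple2⟩ :=
        exists_chain_ending (p := p) (b := b') (m := k - 2) (by omega)
          (by have := mem_Big.mp hb'; omega)
      have hdown : p ⟨b.1 - 1, by have := b.2; omega⟩ < p ⟨b.1 - 2, by have := b.2; omega⟩ :=
        alt_down' halt hp (by have := b.2; omega) (by have := b.2; omega) (by omega) (by omega)
      apply hav
      have hx1 : ∀ t, w t < (⟨b.1 - 2, by have := b.2; omega⟩ : Fin n) := by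
        intro t
        refine lt_of_le_of_lt (hle2 t) ?_
        rw [Fin.lt_def]
        simp
        omega
      have hx2 : ∀ t, p (w t) < p (⟨b.1 - 1, by have := b.2; omega⟩ : Fin n) :=
        fun t => lt_of_le_of_lt (hple2 t) h2
      have hx3 : (⟨b.1 - 2, by have := b.2; omega⟩ : Fin n) < ⟨b.1 - 1, by have := b.2; omega⟩ := by
        rw [Fin.lt_def]
        simp
        omega
      exact mkOcc hk hw hpw hx1 hx2 hx3 hdown

end Struct

section PhiSec

variable {p : Fin n → Fin n}

lemma claimE_right' (hk : 3 ≤ k) (hp : Function.Injective p) (halt : Alternating p) (hn : Odd n)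
    (hav : Avoids p (⇑(Equiv.swap (⟨k - 2, Nat.sub_lt (by omega) (by omega)⟩ : Fin k) ⟨k - 1, Nat.sub_lt (by omega) (by omega)⟩)))
    {b b' : Fin n} (hb : b ∈ Big k p) (hb' : b' ∈ Big k p) (hle : b' ≤ b)
    {j : ℕ} (hj : j < n) (hij : j = b.1 + 1) : p ⟨j, hj⟩ < p b' := by
  subst hij
  exact claimE_right hk hp halt hn hav hb hb' hle

lemma claimE_left' (hk : 3 ≤ k) (hp : Function.Injective p) (halt : Alternating p) (hn : Odd n)
    (hav : Avoids p (⇑(Equiv.swap (⟨k - 2, Nat.sub_lt (by omega) (by omega)⟩ : Fin k) ⟨k - 1, Nat.sub_lt (by omega) (by omega)⟩)))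
    {b b' : Fin n} (hb : b ∈ Big k p) (hb' : b' ∈ Big k p) (hle : b' ≤ b)
    {j : ℕ} (hj : j < n) (hij : j = b.1 - 1) : p ⟨j, hj⟩ < p b' := by
  subst hij
  exact claimE_left hk hp halt hn hav hb hb' hle

noncomputable def eB (k : ℕ) (p : Fin n → Fin n) : Fin (Big k p).card ≃o {x // x ∈ Big k p} :=
  (Big k p).orderIsoOfFin rfl

noncomputable def bval (k : ℕ) (p : Fin n → Fin n) : Fin (Big k p).card → Fin n :=
  fun t => p ((eB k p t) : Fin n)

noncomputable def sigs (k : ℕ) (p : Fin n → Fin n) : Equiv.Perm (Fin (Big k p).card) :=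
  Tuple.sort (bval k p)

noncomputable def Phi (k : ℕ) (p : Fin n → Fin n) : Fin n → Fin n := fun x =>
  if h : x ∈ Big k p then bval k p (sigs k p ((eB k p).symm ⟨x, h⟩).rev) else p x

lemma bval_inj (hp : Function.Injective p) : Function.Injective (bval k p) := by
  intro a b hab
  have := hp hab
  have h2 : (eB k p a) = (eB k p b) := Subtype.ext this
  exact (eB k p).injective h2

lemma vs_strictMono (hp : Function.Injective p) :
    StrictMono (bval k p ∘ (sigs k p)) :=
  (Tuple.monotone_sort (bval k p)).strictMono_of_injective
    ((bval_inj hp).comp (sigs k p).injective)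

lemma Phi_not_mem {x : Fin n} (h : x ∉ Big k p) : Phi k p x = p x := dif_neg h

lemma Phi_mem {x : Fin n} (h : x ∈ Big k p) :
    Phi k p x = bval k p (sigs k p ((eB k p).symm ⟨x, h⟩).rev) := dif_pos h

lemma Phi_mem_bigval {x : Fin n} (h : x ∈ Big k p) :
    ∃ b'' : Fin n, b'' ∈ Big k p ∧ Phi k p x = p b'' := by
  rw [Phi_mem h]
  exact ⟨_, (eB k p (sigs k p ((eB k p).symm ⟨x, h⟩).rev)).2, rfl⟩

lemma Phi_decreasing (hp : Function.Injective p) {b1 b2 : Fin n}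
    (h1 : b1 ∈ Big k p) (h2 : b2 ∈ Big k p) (hlt : b1 < b2) :
    Phi k p b2 < Phi k p b1 := by
  rw [Phi_mem h1, Phi_mem h2]
  apply vs_strictMono hp
  rw [Fin.rev_lt_rev]
  exact (OrderIso.lt_iff_lt _).mpr (Subtype.mk_lt_mk.mpr hlt)

lemma Phi_lb (hp : Function.Injective p) {b : Fin n} (hb : b ∈ Big k p) :
    ∃ b', b' ∈ Big k p ∧ b' ≤ b ∧ p b' ≤ Phi k p b := by
  by_contra hcon
  push_neg at hcon
  set t := (eB k p).symm ⟨b, hb⟩ with ht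
  have key : ∀ s : Fin (Big k p).card, s ≤ t → t.rev < (sigs k p).symm s := by
    intro s hs
    have hmem : ((eB k p s : {x // x ∈ Big k p}) : Fin n) ∈ Big k p := (eB k p s).2
    have hle : ((eB k p s : {x // x ∈ Big k p}) : Fin n) ≤ b := by
      have h3 : eB k p s ≤ eB k p t := (eB k p).monotone hs
      have h4 : eB k p t = ⟨b, hb⟩ := (eB k p).apply_symm_apply _
      rw [h4] at h3
      exact h3
    have h5 := hcon _ hmem hle
    have h6 : bval k p s = (bval k p ∘ sigs k p) ((sigs k p).symm s) := by
      simp [Function.comp]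
    rw [Phi_mem hb, ← ht] at h5
    have h7 : (bval k p ∘ sigs k p) t.rev < (bval k p ∘ sigs k p) ((sigs k p).symm s) := by
      rw [← h6]
      exact h5
    exact (vs_strictMono hp).lt_iff_lt.mp h7
  have hcard := Finset.card_le_card_of_injOn (s := Finset.Iic t) (t := Finset.Ioi t.rev)
    (fun s => (sigs k p).symm s)
    (fun s hs => by
      simp only [Finset.mem_coe, Finset.mem_Ioi]
      exact key s (Finset.mem_Iic.mp hs))
    (fun a _ b _ hab => (sigs k p).symm.injective hab)
  rw [Fin.card_Iic, Fin.card_Ioi] at hcard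
  have htm : t.1 < (Big k p).card := t.2
  have hrev : (t.rev : ℕ) = (Big k p).card - 1 - t.1 := by
    rw [Fin.val_rev]
    omega
  omega

lemma Phi_injective (hp : Function.Injective p) : Function.Injective (Phi k p) := by
  intro x1 x2 h
  by_cases h1 : x1 ∈ Big k p <;> by_cases h2 : x2 ∈ Big k p
  · rw [Phi_mem h1, Phi_mem h2] at h
    have h3 := (Fin.rev_injective
      ((sigs k p).injective (bval_inj hp h)))
    have h4 := (eB k p).symm.injective h3
    simpa using congrArg Subtype.val (congrArg (fun z => (⟨z.1, z.2⟩ : {x // x ∈ Big k p})) h4)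
  · rw [Phi_mem h1, Phi_not_mem h2] at h
    have := hp h
    exact absurd (this ▸ (eB k p _).2) h2
  · rw [Phi_not_mem h1, Phi_mem h2] at h
    have := hp h
    exact absurd (this.symm ▸ (eB k p _).2) h1
  · rw [Phi_not_mem h1, Phi_not_mem h2] at h
    exact hp h

lemma Phi_alternating (hk : 3 ≤ k) (hp : Function.Injective p) (halt : Alternating p)
    (hn : Odd n)
    (hav : Avoids p (⇑(Equiv.swap (⟨k - 2, Nat.sub_lt (by omega) (by omega)⟩ : Fin k) ⟨k - 1, Nat.sub_lt (by omega) (by omega)⟩))) :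
    Alternating (Phi k p) := by
  intro i h
  set x : Fin n := ⟨i, by omega⟩ with hxdef
  set y : Fin n := ⟨i + 1, h⟩ with hydef
  by_cases hi : i % 2 = 0
  · have hx : x ∉ Big k p := by
      intro hmem
      have := big_odd hk hp halt hav hmem
      rw [hxdef] at this
      simp at this
      omega
    refine iff_of_true ?_ hi
    by_cases hy : y ∈ Big k p
    · obtain ⟨b', hb', hble, hval⟩ := Phi_lb hp hy
      have hE := claimE_left' hk hp halt hn hav hy hb' hble (j := i) (by omega)
        (by rw [hydef]; simp)
      rw [Phi_not_mem hx]
      exact lt_of_lt_of_le hE hval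
    · rw [Phi_not_mem hx, Phi_not_mem hy]
      exact alt_up halt h hi
  · have hy : y ∉ Big k p := by
      intro hmem
      have := big_odd hk hp halt hav hmem
      rw [hydef] at this
      simp at this
      omega
    refine iff_of_false ?_ hi
    rw [not_lt]
    apply le_of_lt
    by_cases hx : x ∈ Big k p
    · obtain ⟨b', hb', hble, hval⟩ := Phi_lb hp hx
      have hE := claimE_right' hk hp halt hn hav hx hb' hble (j := i + 1) h
        (by rw [hxdef])
      rw [Phi_not_mem hy]
      exact lt_of_lt_of_le hE hval
    · rw [Phi_not_mem hx, Phi_not_mem hy]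
      exact alt_down halt hp h (by omega)

end PhiSec

lemma mkChainMem (hk : 3 ≤ k) {q : Fin n → Fin n} {w : Fin (k-2) → Fin n}
    (hw : StrictMono w) (hqw : StrictMono (q ∘ w)) {b : Fin n}
    (hwb : ∀ t, w t < b) (hqwb : ∀ t, q (w t) < q b) : (k - 1) ∈ RkSet q b := by
  refine ⟨fun t => if h : t.1 < k - 2 then w ⟨t.1, h⟩ else b, ?_, ?_, by omega, ?_⟩
  · intro a c hac
    by_cases hcc : c.1 < k - 2
    · have haa : a.1 < k - 2 := lt_trans (Fin.lt_def.mp hac) hcc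
      simp only [dif_pos haa, dif_pos hcc]
      exact hw (by rw [Fin.mk_lt_mk]; exact Fin.lt_def.mp hac)
    · have hceq : c.1 = k - 2 := by have := c.2; omega
      have haa : a.1 < k - 2 := by have := Fin.lt_def.mp hac; omega
      simp only [dif_pos haa, dif_neg hcc]
      exact hwb _
  · intro a c hac
    by_cases hcc : c.1 < k - 2
    · have haa : a.1 < k - 2 := lt_trans (Fin.lt_def.mp hac) hcc
      simp only [Function.comp_apply, dif_pos haa, dif_pos hcc]
      exact hqw (show (⟨a.1, haa⟩ : Fin (k-2)) < ⟨c.1, hcc⟩ by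
        rw [Fin.mk_lt_mk]; exact Fin.lt_def.mp hac)
    · have haa : a.1 < k - 2 := by have := Fin.lt_def.mp hac; omega
      simp only [Function.comp_apply, dif_pos haa, dif_neg hcc]
      exact hqwb _
  · simp only [dif_neg (show ¬ (k - 1 - 1 < k - 2) by omega)]

lemma Phi_avoids_id (hk : 3 ≤ k) {p : Fin n → Fin n} (hp : Function.Injective p) :
    Avoids (Phi k p) (id : Fin k → Fin k) := by
  rintro ⟨f, hf, hiff⟩
  have hpf : StrictMono (Phi k p ∘ f) := fun a b hab => (hiff a b).mp hab
  by_cases hc : ∀ a : Fin k, a.1 ≤ k - 2 → f a ∉ Big k p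
  · -- all of the first k-1 entries are small: p-chain of length k-1 ending at small entry
    have hmem : (k - 1) ∈ RkSet p (f ⟨k - 2, by omega⟩) := by
      refine ⟨fun t : Fin (k-1) => f ⟨t.1, by omega⟩, ?_, ?_, by omega, ?_⟩
      · intro a b hab
        exact hf (by rw [Fin.mk_lt_mk]; exact Fin.lt_def.mp hab)
      · intro a b hab
        have ha := hc (⟨a.1, by omega⟩ : Fin k) (by simp; omega)
        have hb := hc (⟨b.1, by omega⟩ : Fin k) (by simp; omega)
        have h1 : Phi k p (f ⟨a.1, by omega⟩) < Phi k p (f ⟨b.1, by omega⟩) :=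
          hpf (by rw [Fin.mk_lt_mk]; exact Fin.lt_def.mp hab)
        rwa [Phi_not_mem ha, Phi_not_mem hb] at h1
      · congr 1
    have : f ⟨k - 2, by omega⟩ ∈ Big k p := mem_Big.mpr (le_rank hmem)
    exact absurd this (hc _ (by simp))
  · push_neg at hc
    obtain ⟨a0, ha0, hbig0⟩ := hc
    have ha1lt : a0.1 + 1 < k := by omega
    have hstep : Phi k p (f a0) < Phi k p (f ⟨a0.1 + 1, ha1lt⟩) :=
      hpf (by rw [Fin.lt_def]; simp)
    have hflt : f a0 < f ⟨a0.1 + 1, ha1lt⟩ := hf (by rw [Fin.lt_def]; simp)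
    by_cases hB1 : f ⟨a0.1 + 1, ha1lt⟩ ∈ Big k p
    · exact absurd hstep (not_lt.mpr (Phi_decreasing hp hbig0 hB1 hflt).le)
    · rw [Phi_not_mem hB1] at hstep
      obtain ⟨b', hb', hble, hval⟩ := Phi_lb hp hbig0
      have h2 : p b' < p (f ⟨a0.1 + 1, ha1lt⟩) := lt_of_le_of_lt hval hstep
      have h3 : b' < f ⟨a0.1 + 1, ha1lt⟩ := lt_of_le_of_lt hble hflt
      have h4 := rank_lt h3 h2
      have h5 : f ⟨a0.1 + 1, ha1lt⟩ ∈ Big k p := by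
        rw [mem_Big]
        have := mem_Big.mp hb'
        omega
      exact hB1 h5

lemma Big_Phi_eq (hk : 3 ≤ k) {p : Fin n → Fin n} (hp : Function.Injective p) :
    Big k (Phi k p) = Big k p := by
  ext i
  constructor
  · intro hi
    by_contra hip
    have hR : k - 1 ≤ rank (Phi k p) i := mem_Big.mp hi
    obtain ⟨c, hcm, hcp, h0, hclast⟩ := rank_mem (Phi k p) i
    have he : StrictMono (fun t : Fin (k-1) =>
        (⟨rank (Phi k p) i - (k-1) + t.1, by have := t.2; omega⟩ : Fin (rank (Phi k p) i))) := by
      intro a b hab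
      rw [Fin.mk_lt_mk]
      have := Fin.lt_def.mp hab
      omega
    set c' : Fin (k-1) → Fin n := fun t =>
      c ⟨rank (Phi k p) i - (k-1) + t.1, by have := t.2; omega⟩ with hc'def
    have hc'm : StrictMono c' := fun a b hab => hcm (he hab)
    have hc'p : StrictMono (Phi k p ∘ c') := fun a b hab => hcp (he hab)
    have hc'last : c' ⟨k - 2, by omega⟩ = i := by
      rw [hc'def]
      simp only []
      have hmk : (⟨rank (Phi k p) i - (k-1) + (⟨k - 2, by omega⟩ : Fin (k-1)).1, by omega⟩ :
          Fin (rank (Phi k p) i)) = ⟨rank (Phi k p) i - 1, by omega⟩ := by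
        rw [Fin.ext_iff]
        show rank (Phi k p) i - (k-1) + (k - 2) = rank (Phi k p) i - 1
        omega
      rw [hmk, hclast]
    by_cases hall : ∀ j : Fin (k-1), j.1 ≤ k - 3 → c' j ∉ Big k p
    · have hmem : (k - 1) ∈ RkSet p i := by
        refine ⟨c', hc'm, ?_, by omega, ?_⟩
        · intro a b hab
          have hPh : Phi k p (c' a) < Phi k p (c' b) := hc'p hab
          have hnb : ∀ j : Fin (k-1), c' j ∉ Big k p := by
            intro j
            by_cases hj : j.1 ≤ k - 3
            · exact hall j hj
            · have hj2 : j.1 = k - 2 := by have := j.2; omega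
              have : j = ⟨k - 2, by omega⟩ := by rw [Fin.ext_iff]; exact hj2
              rw [this, hc'last]
              exact hip
          rwa [Phi_not_mem (hnb a), Phi_not_mem (hnb b)] at hPh
        · have : (⟨k - 1 - 1, by omega⟩ : Fin (k-1)) = ⟨k - 2, by omega⟩ := by
            rw [Fin.ext_iff]
            show k - 1 - 1 = k - 2
            omega
          rw [this, hc'last]
      exact hip (mem_Big.mpr (le_rank hmem))
    · push_neg at hall
      obtain ⟨a0, ha0, hbig0⟩ := hall
      have ha1lt : a0.1 + 1 < k - 1 := by omega
      have hstep : Phi k p (c' a0) < Phi k p (c' ⟨a0.1 + 1, ha1lt⟩) :=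
        hc'p (by rw [Fin.lt_def]; simp)
      have hflt : c' a0 < c' ⟨a0.1 + 1, ha1lt⟩ := hc'm (by rw [Fin.lt_def]; simp)
      by_cases hB1 : c' ⟨a0.1 + 1, ha1lt⟩ ∈ Big k p
      · exact absurd hstep (not_lt.mpr (Phi_decreasing hp hbig0 hB1 hflt).le)
      · rw [Phi_not_mem hB1] at hstep
        obtain ⟨b', hb', hble, hval⟩ := Phi_lb hp hbig0
        have h2 : p b' < p (c' ⟨a0.1 + 1, ha1lt⟩) := lt_of_le_of_lt hval hstep
        have h3 : b' < c' ⟨a0.1 + 1, ha1lt⟩ := lt_of_le_of_lt hble hflt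
        have h4 := rank_lt h3 h2
        refine absurd ?_ hB1
        rw [mem_Big]
        have := mem_Big.mp hb'
        omega
  · intro hi
    obtain ⟨b', hb', hble, hval⟩ := Phi_lb hp hi
    obtain ⟨w, hw, hpw, hwlt, hwplt, hwrank⟩ :=
      exists_exactChain (p := p) (k - 2) b' (by have := mem_Big.mp hb'; omega)
    have hsmall : ∀ t, w t ∉ Big k p := by
      intro t hmem
      have := mem_Big.mp hmem
      rw [hwrank t] at this
      have := t.2
      omega
    have hPhw : StrictMono (Phi k p ∘ w) := by
      intro a b hab
      have h1 : p (w a) < p (w b) := hpw hab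
      simp only [Function.comp_apply]
      rwa [Phi_not_mem (hsmall a), Phi_not_mem (hsmall b)]
    have hmem : (k - 1) ∈ RkSet (Phi k p) i := by
      refine mkChainMem hk hw hPhw ?_ ?_
      · intro t
        exact lt_of_lt_of_le (hwlt t) hble
      · intro t
        rw [Phi_not_mem (hsmall t)]
        exact lt_of_lt_of_le (hwplt t) hval
    exact mem_Big.mpr (le_rank hmem)

lemma unique_core (hk : 3 ≤ k) {p1 p2 : Fin n → Fin n}
    (hp1 : Function.Injective p1)
    (hav2 : Avoids p2 (⇑(Equiv.swap (⟨k - 2, Nat.sub_lt (by omega) (by omega)⟩ : Fin k) ⟨k - 1, Nat.sub_lt (by omega) (by omega)⟩)))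
    (hp2 : Function.Bijective p2)
    (hsmall : ∀ x, x ∉ Big k p1 → p1 x = p2 x)
    {b : Fin n} (hbBig : b ∈ Big k p1)
    (hmin : ∀ x, x < b → p1 x = p2 x)
    (hlt : p1 b < p2 b) : False := by
  obtain ⟨x, hx⟩ := hp2.2 (p1 b)
  have hxBig : x ∈ Big k p1 := by
    by_contra hxs
    have h1 := hsmall x hxs
    rw [hx] at h1
    have h2 := hp1 h1
    rw [h2] at hxs
    exact hxs hbBig
  have hxb : x ≠ b := by
    intro h
    rw [h] at hx
    exact absurd hx (ne_of_lt hlt).symm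
  have hbx : b < x := by
    rcases lt_trichotomy x b with h | h | h
    · exact absurd (hp1 ((hmin x h).trans hx)) hxb
    · exact absurd h hxb
    · exact h
  obtain ⟨u, hu, hpu, hult, huplt, hurank⟩ :=
    exists_exactChain (p := p1) (k - 2) b (by have := mem_Big.mp hbBig; omega)
  have husmall : ∀ t, u t ∉ Big k p1 := by
    intro t hmem
    have h1 := mem_Big.mp hmem
    rw [hurank t] at h1
    have := t.2
    omega
  have hval : ∀ t, p2 (u t) = p1 (u t) := fun t => (hsmall _ (husmall t)).symm
  have hp2u : StrictMono (p2 ∘ u) := by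
    intro a c hac
    simp only [Function.comp_apply]
    rw [hval a, hval c]
    exact hpu hac
  apply hav2
  refine mkOcc hk hu hp2u (x := b) (y := x) hult ?_ hbx ?_
  · intro t
    rw [hval t, hx]
    exact huplt t
  · rw [hx]
    exact hlt

lemma Phi_eq_imp (hk : 3 ≤ k) {p1 p2 : Fin n → Fin n}
    (hp1 : Function.Bijective p1) (hp2 : Function.Bijective p2)
    (hav1 : Avoids p1 (⇑(Equiv.swap (⟨k - 2, Nat.sub_lt (by omega) (by omega)⟩ : Fin k) ⟨k - 1, Nat.sub_lt (by omega) (by omega)⟩)))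
    (hav2 : Avoids p2 (⇑(Equiv.swap (⟨k - 2, Nat.sub_lt (by omega) (by omega)⟩ : Fin k) ⟨k - 1, Nat.sub_lt (by omega) (by omega)⟩)))
    (hPhi : Phi k p1 = Phi k p2) : p1 = p2 := by
  have hB : Big k p1 = Big k p2 := by
    rw [← Big_Phi_eq hk hp1.1, ← Big_Phi_eq hk hp2.1, hPhi]
  have hsmall : ∀ x, x ∉ Big k p1 → p1 x = p2 x := by
    intro x hx
    have hx2 : x ∉ Big k p2 := by rw [← hB]; exact hx
    rw [← Phi_not_mem (p := p1) hx, ← Phi_not_mem (p := p2) hx2, hPhi]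
  by_contra hne
  have hDne : (Finset.univ.filter (fun b => p1 b ≠ p2 b)).Nonempty := by
    obtain ⟨x, hx⟩ := Function.ne_iff.mp hne
    exact ⟨x, Finset.mem_filter.mpr ⟨Finset.mem_univ x, hx⟩⟩
  set D := Finset.univ.filter (fun b => p1 b ≠ p2 b) with hD
  set b := D.min' hDne with hb
  have hbD : p1 b ≠ p2 b := (Finset.mem_filter.mp (D.min'_mem hDne)).2
  have hbBig : b ∈ Big k p1 := by
    by_contra hbs
    exact hbD (hsmall b hbs)
  have hmin : ∀ x, x < b → p1 x = p2 x := by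
    intro x hxb
    by_contra hxne
    have hxD : x ∈ D := Finset.mem_filter.mpr ⟨Finset.mem_univ x, hxne⟩
    exact absurd hxb (not_lt.mpr (D.min'_le x hxD))
  rcases hbD.lt_or_gt with h | h
  · exact unique_core hk hp1.1 hav2 hp2 hsmall hbBig hmin h
  · refine unique_core hk hp2.1 hav1 hp1 ?_ ?_ ?_ h
    · intro x hx
      exact (hsmall x (by rw [hB]; exact hx)).symm
    · rw [← hB]; exact hbBig
    · intro x hxb
      exact (hmin x hxb).symm

end AltP

theorem stmt11 (k n : ℕ) (hk : 3 ≤ k) (hn : Odd n) :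
    Nat.card {p : Fin n → Fin n // Function.Bijective p ∧ Alternating p ∧
      Avoids p ⇑(Equiv.swap (⟨k - 2, by omega⟩ : Fin k) ⟨k - 1, by omega⟩)} ≤
    Nat.card {p : Fin n → Fin n // Function.Bijective p ∧ Alternating p ∧
      Avoids p (id : Fin k → Fin k)} := by
  apply Nat.card_le_card_of_injective
    (f := fun q => ⟨AltP.Phi k q.1,
      Finite.injective_iff_bijective.mp (AltP.Phi_injective q.2.1.1),
      AltP.Phi_alternating hk q.2.1.1 q.2.2.1 hn q.2.2.2,
      AltP.Phi_avoids_id hk q.2.1.1⟩)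
  intro q1 q2 h
  apply Subtype.ext
  exact AltP.Phi_eq_imp hk q1.2.1 q2.2.1 q1.2.2.2 q2.2.2.2
    (congrArg Subtype.val h)
end

section
/- For every integer k ≥ 3 and every positive integer n, the number of permutations of length n avoiding 12⋯k equals the number of permutations of length n avoiding 213⋯k (the identity with its first two values transposed). -/
open Function

section NECsec
variable {n : ℕ}

/-- There is an increasing chain of length `m+1` strictly north-east of cell `(x, y)`. -/
def NEC (m : ℕ) (p : Fin n → Fin n) (x y : Fin n) : Prop :=
  ∃ g : Fin (m+1) → Fin n, StrictMono g ∧ StrictMono (p ∘ g) ∧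
    x < g ⟨0, Nat.succ_pos m⟩ ∧ y < p (g ⟨0, Nat.succ_pos m⟩)

lemma nec_mono {m : ℕ} {p : Fin n → Fin n} {x y x' y' : Fin n}
    (h : NEC m p x y) (hx : x' ≤ x) (hy : y' ≤ y) : NEC m p x' y' := by
  obtain ⟨g, h1, h2, h3, h4⟩ := h
  exact ⟨g, h1, h2, lt_of_le_of_lt hx h3, lt_of_le_of_lt hy h4⟩

lemma nec_pure {m : ℕ} {p : Fin n → Fin n} {x y : Fin n} (h : NEC m p x y) :
    ∃ g : Fin (m+1) → Fin n, StrictMono g ∧ StrictMono (p ∘ g) ∧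
      x < g ⟨0, Nat.succ_pos m⟩ ∧ y < p (g ⟨0, Nat.succ_pos m⟩) ∧
      ∀ i, ¬ NEC m p (g i) (p (g i)) := by
  classical
  let S : Finset (Fin n) :=
    Finset.univ.filter (fun t => ∃ g : Fin (m+1) → Fin n,
      (StrictMono g ∧ StrictMono (p ∘ g) ∧ x < g ⟨0, Nat.succ_pos m⟩ ∧
        y < p (g ⟨0, Nat.succ_pos m⟩)) ∧ g ⟨0, Nat.succ_pos m⟩ = t)
  have hS : S.Nonempty := by
    obtain ⟨g, h1, h2, h3, h4⟩ := h
    refine ⟨g ⟨0, Nat.succ_pos m⟩, ?_⟩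
    simp only [S, Finset.mem_filter, Finset.mem_univ, true_and]
    exact ⟨g, ⟨h1, h2, h3, h4⟩, rfl⟩
  obtain ⟨g, ⟨h1, h2, h3, h4⟩, h5⟩ := (Finset.mem_filter.mp (S.max'_mem hS)).2
  refine ⟨g, h1, h2, h3, h4, fun i hi => ?_⟩
  obtain ⟨g', k1, k2, k3, k4⟩ := hi
  have hg0i : g ⟨0, Nat.succ_pos m⟩ ≤ g i := h1.monotone (by rw [Fin.le_def]; exact Nat.zero_le _)
  have hp0i : p (g ⟨0, Nat.succ_pos m⟩) ≤ p (g i) :=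
    h2.monotone (by rw [Fin.le_def]; exact Nat.zero_le _)
  have hmem : g' ⟨0, Nat.succ_pos m⟩ ∈ S := by
    simp only [S, Finset.mem_filter, Finset.mem_univ, true_and]
    exact ⟨g', ⟨k1, k2, h3.trans_le hg0i |>.trans k3, h4.trans_le hp0i |>.trans k4⟩, rfl⟩
  have hle : g' ⟨0, Nat.succ_pos m⟩ ≤ g ⟨0, Nat.succ_pos m⟩ := h5 ▸ S.le_max' _ hmem
  exact absurd (hg0i.trans_lt k3) (not_lt.mpr hle)

/-- If `p'` agrees with `p` outside `C`, where `C` is the inside of the shape of `p`,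
and the new points on `C` are still inside the shape, then the shapes coincide. -/
lemma nec_congr {m : ℕ} {p p' : Fin n → Fin n} {C : Finset (Fin n)}
    (hout : ∀ j, j ∉ C → p' j = p j)
    (hC : ∀ j, j ∈ C ↔ NEC m p j (p j))
    (hin : ∀ j, j ∈ C → NEC m p j (p' j)) :
    ∀ x y : Fin n, NEC m p' x y ↔ NEC m p x y := by
  have dir1 : ∀ x y : Fin n, NEC m p x y → NEC m p' x y := by
    intro x y h
    obtain ⟨g, h1, h2, h3, h4, h5⟩ := nec_pure h
    have hgC : ∀ i, p' (g i) = p (g i) := by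
      intro i
      exact hout _ (fun hmem => h5 i ((hC _).mp hmem))
    have hpg : p' ∘ g = p ∘ g := funext fun i => hgC i
    exact ⟨g, h1, by rw [hpg]; exact h2, h3, by rw [hgC _]; exact h4⟩
  intro x y
  constructor
  · intro h
    obtain ⟨g, h1, h2, h3, h4, h5⟩ := nec_pure h
    have hgC : ∀ i, g i ∉ C := by
      intro i hmem
      exact h5 i (dir1 _ _ (hin _ hmem))
    have hgc : ∀ i, p' (g i) = p (g i) := fun i => hout _ (hgC i)
    have hpg : p ∘ g = p' ∘ g := funext fun i => (hgc i).symm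
    exact ⟨g, h1, by rw [hpg]; exact h2, h3, by rw [← hgc _]; exact h4⟩
  · exact dir1 x y

private lemma buildMono {α : Type*} [Preorder α] {m : ℕ} {u v : α} {w : Fin (m+1) → α}
    (huv : u < v) (hvw : v < w ⟨0, Nat.succ_pos m⟩) (hw : StrictMono w) :
    StrictMono (fun a : Fin (m+3) =>
      if a.1 = 0 then u else if a.1 = 1 then v else w ⟨a.1-2, by omega⟩) := by
  intro a b hab
  have hab' : a.1 < b.1 := hab
  have hb := b.2
  simp only
  by_cases hb1 : b.1 = 1
  · have ha0 : a.1 = 0 := by omega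
    rw [if_pos ha0, if_neg (by omega), if_pos hb1]
    exact huv
  · by_cases hb0 : b.1 = 0
    · omega
    · have hb2 : 2 ≤ b.1 := by omega
      rw [if_neg hb0, if_neg hb1]
      have hw0 : w ⟨0, Nat.succ_pos m⟩ ≤ w ⟨b.1-2, by omega⟩ :=
        hw.monotone (by rw [Fin.le_def]; exact Nat.zero_le _)
      by_cases ha0 : a.1 = 0
      · rw [if_pos ha0]
        exact lt_of_lt_of_le (huv.trans hvw) hw0
      · by_cases ha1 : a.1 = 1
        · rw [if_neg ha0, if_pos ha1]
          exact lt_of_lt_of_le hvw hw0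
        · rw [if_neg ha0, if_neg ha1]
          exact hw (by simp only [Fin.mk_lt_mk]; omega)

lemma contains_id_iff {m : ℕ} {p : Fin n → Fin n} :
    Contains p (id : Fin (m+3) → Fin (m+3)) ↔
    ∃ i j : Fin n, i < j ∧ p i < p j ∧ NEC m p j (p j) := by
  constructor
  · rintro ⟨f, hf, hiff⟩
    have hpf : StrictMono (p ∘ f) := fun a b hab => (hiff a b).mp hab
    refine ⟨f ⟨0, by omega⟩, f ⟨1, by omega⟩, hf (Fin.mk_lt_mk.mpr one_pos),
      hpf (show (⟨0, by omega⟩ : Fin (m+3)) < ⟨1, by omega⟩ from Fin.mk_lt_mk.mpr one_pos), ?_⟩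
    refine ⟨fun l => f ⟨l.1+2, by omega⟩, ?_, ?_, ?_, ?_⟩
    · intro a b hab
      exact hf (Fin.mk_lt_mk.mpr (Nat.add_lt_add_right hab 2))
    · intro a b hab
      exact hpf (show (⟨a.1+2, _⟩ : Fin (m+3)) < ⟨b.1+2, _⟩ from
        Fin.mk_lt_mk.mpr (Nat.add_lt_add_right hab 2))
    · exact hf (Fin.mk_lt_mk.mpr (by omega))
    · exact hpf (show (⟨1, by omega⟩ : Fin (m+3)) < ⟨0+2, by omega⟩ from
        Fin.mk_lt_mk.mpr (by omega))
  · rintro ⟨i, j, hij, hpij, g, h1, h2, h3, h4⟩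
    set f : Fin (m+3) → Fin n := fun a =>
      if a.1 = 0 then i else if a.1 = 1 then j else g ⟨a.1-2, by omega⟩ with hfdef
    have hmono : StrictMono f := buildMono hij h3 h1
    have hpfeq : p ∘ f = fun a : Fin (m+3) =>
        if a.1 = 0 then p i else if a.1 = 1 then p j else (p ∘ g) ⟨a.1-2, by omega⟩ := by
      funext a
      simp only [comp_apply, hfdef]
      rw [apply_ite p, apply_ite p]
    have hpmono : StrictMono (p ∘ f) := by
      rw [hpfeq]; exact buildMono hpij h4 h2
    exact ⟨f, hmono, fun a b => ⟨fun h => hpmono h, fun h => by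
      by_contra hno
      rcases lt_trichotomy (a : Fin (m+3)) b with hlt | heq | hgt
      · exact hno hlt
      · rw [heq] at h; exact lt_irrefl _ h
      · exact absurd (hpmono hgt) (not_lt.mpr h.le)⟩⟩

lemma swap_val_big {m : ℕ} (a : Fin (m+3)) (ha : 2 ≤ a.1) :
    Equiv.swap (⟨0, by omega⟩ : Fin (m+3)) ⟨1, by omega⟩ a = a := by
  apply Equiv.swap_apply_of_ne_of_ne
  · intro h; rw [Fin.ext_iff] at h; have h' : a.1 = 0 := h; omega
  · intro h; rw [Fin.ext_iff] at h; simp at h; omega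

lemma contains_swap_iff {m : ℕ} {p : Fin n → Fin n} :
    Contains p ⇑(Equiv.swap (⟨0, by omega⟩ : Fin (m+3)) ⟨1, by omega⟩) ↔
    ∃ i j : Fin n, i < j ∧ p j < p i ∧ NEC m p j (p i) := by
  set q := Equiv.swap (⟨0, by omega⟩ : Fin (m+3)) ⟨1, by omega⟩ with hq
  have hq0 : q ⟨0, by omega⟩ = ⟨1, by omega⟩ := Equiv.swap_apply_left _ _
  have hq1 : q ⟨1, by omega⟩ = ⟨0, by omega⟩ := Equiv.swap_apply_right _ _
  have hqbig : ∀ (t : ℕ) (h2 : 2 ≤ t) (h : t < m+3), q ⟨t, h⟩ = ⟨t, h⟩ :=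
    fun t h2 h => swap_val_big ⟨t, h⟩ h2
  have hqBIG : ∀ a : Fin (m+3), 2 ≤ a.1 → q a = a := fun a ha => swap_val_big a ha
  constructor
  · rintro ⟨f, hf, hiff⟩
    have hlt : ∀ l : Fin (m+1), l.1+2 < m+3 := fun l => by omega
    have h02 : (0:ℕ) < m+3 := by omega
    have h12 : (1:ℕ) < m+3 := by omega
    have h22 : (2:ℕ) < m+3 := by omega
    have hq' : ∀ a b : Fin (m+3), q a < q b → p (f a) < p (f b) := fun a b h => (hiff a b).mp h
    have c1 : p (f ⟨1, h12⟩) < p (f ⟨0, h02⟩) := by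
      apply hq'
      rw [hq0, hq1]
      exact Fin.mk_lt_mk.mpr one_pos
    have c2 : ∀ a b : Fin (m+1), a < b → p (f ⟨a.1+2, hlt a⟩) < p (f ⟨b.1+2, hlt b⟩) := by
      intro a b hab
      apply hq'
      rw [hqbig (a.1+2) (by omega) (hlt a), hqbig (b.1+2) (by omega) (hlt b)]
      exact Fin.mk_lt_mk.mpr (Nat.add_lt_add_right hab 2)
    have c3 : p (f ⟨0, h02⟩) < p (f ⟨0+2, h22⟩) := by
      apply hq'
      rw [hq0, hqbig (0+2) (by omega) h22]
      exact Fin.mk_lt_mk.mpr (by omega)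
    refine ⟨f ⟨0, h02⟩, f ⟨1, h12⟩, hf (Fin.mk_lt_mk.mpr one_pos), c1, ?_⟩
    refine ⟨fun l => f ⟨l.1+2, hlt l⟩, ?_, ?_, ?_, ?_⟩
    · intro a b hab
      exact hf (Fin.mk_lt_mk.mpr (Nat.add_lt_add_right hab 2))
    · intro a b hab
      exact c2 a b hab
    · exact hf (Fin.mk_lt_mk.mpr (by omega))
    · exact c3
  · rintro ⟨i, j, hij, hpji, g, h1, h2, h3, h4⟩
    set f : Fin (m+3) → Fin n := fun a =>
      if a.1 = 0 then i else if a.1 = 1 then j else g ⟨a.1-2, by omega⟩ with hfdef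
    have hmono : StrictMono f := buildMono hij h3 h1
    have hg0le : ∀ l : Fin (m+1), p (g ⟨0, Nat.succ_pos m⟩) ≤ p (g l) :=
      fun l => h2.monotone (by rw [Fin.le_def]; exact Nat.zero_le _)
    have f0 : f ⟨0, by omega⟩ = i := by simp [hfdef]
    have f1 : f ⟨1, by omega⟩ = j := by simp [hfdef]
    have f2 : ∀ (a : Fin (m+3)) (h : 2 ≤ a.1), f a = g ⟨a.1-2, by omega⟩ := by
      intro a h
      have e0 : ¬ (a.1 = 0) := by omega
      have e1 : ¬ (a.1 = 1) := by omega
      simp only [hfdef, if_neg e0, if_neg e1]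
    have hfor : ∀ a b : Fin (m+3), q a < q b → p (f a) < p (f b) := by
      intro a b hab
      by_cases ha0 : a.1 = 0
      · have haeq : a = ⟨0, by omega⟩ := Fin.ext ha0
        rw [haeq, hq0] at hab
        rw [haeq, f0]
        by_cases hb1 : b.1 = 1
        · rw [show b = ⟨1, by omega⟩ from Fin.ext hb1, hq1] at hab
          exact absurd hab (by simp [Fin.lt_def])
        · by_cases hb0 : b.1 = 0
          · rw [show b = ⟨0, by omega⟩ from Fin.ext hb0, hq0] at hab
            exact absurd hab (lt_irrefl _)
          · rw [f2 b (by omega)]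
            exact lt_of_lt_of_le h4 (hg0le _)
      · by_cases ha1 : a.1 = 1
        · have haeq : a = ⟨1, by omega⟩ := Fin.ext ha1
          rw [haeq, f1]
          by_cases hb0 : b.1 = 0
          · rw [show b = ⟨0, by omega⟩ from Fin.ext hb0, f0]
            exact hpji
          · by_cases hb1 : b.1 = 1
            · rw [haeq, show b = ⟨1, by omega⟩ from Fin.ext hb1] at hab
              exact absurd hab (lt_irrefl _)
            · rw [f2 b (by omega)]
              exact hpji.trans (lt_of_lt_of_le h4 (hg0le _))
        · have ha2 : 2 ≤ a.1 := by omega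
          rw [hqBIG a ha2] at hab
          rw [f2 a ha2]
          by_cases hb0 : b.1 = 0
          · rw [show b = ⟨0, by omega⟩ from Fin.ext hb0, hq0] at hab
            have : a.1 < 1 := hab
            omega
          · by_cases hb1 : b.1 = 1
            · rw [show b = ⟨1, by omega⟩ from Fin.ext hb1, hq1] at hab
              have : a.1 < 0 := hab
              omega
            · have hb2 : 2 ≤ b.1 := by omega
              rw [hqBIG b hb2] at hab
              have hv : a.1 < b.1 := hab
              have pa : a.1 - 2 < m+1 := by have := a.isLt; omega
              have pb : b.1 - 2 < m+1 := by have := b.isLt; omega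
              have hlt2 : (⟨a.1-2, pa⟩ : Fin (m+1)) < ⟨b.1-2, pb⟩ :=
                Fin.mk_lt_mk.mpr (by omega)
              exact lt_of_lt_of_eq (h2 hlt2) (congrArg p (f2 b hb2)).symm
    refine ⟨f, hmono, fun a b => ⟨hfor a b, fun h => ?_⟩⟩
    by_contra hno
    rcases lt_trichotomy (q a) (q b) with hlt | heq | hgt
    · exact hno hlt
    · rw [q.injective heq] at h; exact lt_irrefl _ h
    · exact absurd (hfor b a hgt) (not_lt.mpr h.le)


lemma image_agree {C : Finset (Fin n)} {p q : Equiv.Perm (Fin n)}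
    (h : ∀ j ∉ C, p j = q j) : C.image ⇑p = C.image ⇑q := by
  classical
  have key : ∀ (p' q' : Equiv.Perm (Fin n)), (∀ j ∉ C, p' j = q' j) →
      ∀ y : Fin n, (∃ x ∈ C, p' x = y) → ∃ x ∈ C, q' x = y := by
    rintro p' q' h' y ⟨x, hx, rfl⟩
    by_cases hmem : q'.symm (p' x) ∈ C
    · exact ⟨q'.symm (p' x), hmem, q'.apply_symm_apply _⟩
    · exfalso
      have : p' (q'.symm (p' x)) = p' x := by
        rw [h' _ hmem]; exact q'.apply_symm_apply _
      have := p'.injective this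
      rw [this] at hmem
      exact hmem hx
  ext y
  simp only [Finset.mem_image]
  exact ⟨key p q h y, key q p (fun j hj => (h j hj).symm) y⟩

lemma exists_unique_av21 (B : Fin n → Fin n → Prop)
    (hB : ∀ ⦃x x' y y' : Fin n⦄, x' ≤ x → y' ≤ y → B x y → B x' y') :
    ∀ (N : ℕ) (C : Finset (Fin n)), C.card = N → ∀ p : Equiv.Perm (Fin n),
      (∀ j ∈ C, B j (p j)) →
      ∃! p' : Equiv.Perm (Fin n),
        (∀ j ∉ C, p' j = p j) ∧ (∀ j ∈ C, B j (p' j)) ∧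
        (∀ i ∈ C, ∀ j ∈ C, i < j → B j (p' i) → p' i < p' j) := by
  intro N
  induction N with
  | zero =>
    intro C hC p hp
    have hCe : C = ∅ := Finset.card_eq_zero.mp hC
    subst hCe
    refine ⟨p, ⟨fun j _ => rfl, by simp, by simp⟩, ?_⟩
    rintro p'' ⟨h1, -, -⟩
    exact Equiv.ext fun x => h1 x (by simp)
  | succ N ih =>
    intro C hC p hp
    classical
    have hne : C.Nonempty := Finset.card_pos.mp (by omega)
    have hRne : (C.image ⇑p).Nonempty := hne.image _
    set R := C.image ⇑p with hR
    set y0 := R.max' hRne with hy0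
    obtain ⟨x0, hx0C, hx0⟩ := Finset.mem_image.mp (R.max'_mem hRne)
    set K := C.filter (fun x => B x y0) with hK
    have hBx0y0 : B x0 y0 := by rw [hy0, ← hx0]; exact hp x0 hx0C
    have hx0K : x0 ∈ K := Finset.mem_filter.mpr ⟨hx0C, hBx0y0⟩
    have hKne : K.Nonempty := ⟨x0, hx0K⟩
    set xs := K.max' hKne with hxs
    have hxsK : xs ∈ K := K.max'_mem hKne
    have hxsC : xs ∈ C := (Finset.mem_filter.mp hxsK).1
    have hBxs : B xs y0 := (Finset.mem_filter.mp hxsK).2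
    have hx0xs : x0 ≤ xs := K.le_max' _ hx0K
    set p1 : Equiv.Perm (Fin n) := p * Equiv.swap xs x0 with hp1def
    have hp1xs : p1 xs = y0 := by
      simp only [hp1def, Equiv.Perm.mul_apply, Equiv.swap_apply_left]; exact hx0
    have hp1x0 : p1 x0 = p xs := by
      simp only [hp1def, Equiv.Perm.mul_apply, Equiv.swap_apply_right]
    have hp1other : ∀ j, j ≠ xs → j ≠ x0 → p1 j = p j := by
      intro j h1 h2
      simp only [hp1def, Equiv.Perm.mul_apply, Equiv.swap_apply_of_ne_of_ne h1 h2]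
    set C' := C.erase xs with hC'
    have hC'card : C'.card = N := by rw [hC']; rw [Finset.card_erase_of_mem hxsC, hC]; omega
    have hp1in : ∀ j ∈ C', B j (p1 j) := by
      intro j hj
      have hjC : j ∈ C := Finset.mem_of_mem_erase hj
      have hjxs : j ≠ xs := (Finset.mem_erase.mp hj).1
      by_cases hjx0 : j = x0
      · subst hjx0
        rw [hp1x0]
        exact hB hx0xs le_rfl (hp xs hxsC)
      · rw [hp1other j hjxs hjx0]
        exact hp j hjC
    obtain ⟨p', ⟨u1, u2, u3⟩, uuniq⟩ := ih C' hC'card p1 hp1in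
    have hout : ∀ j ∉ C, p' j = p j := by
      intro j hj
      have hjC' : j ∉ C' := fun hmem => hj (Finset.mem_of_mem_erase hmem)
      rw [u1 j hjC']
      exact hp1other j (fun h => hj (h ▸ hxsC)) (fun h => hj (h ▸ hx0C))
    have hp'xs : p' xs = y0 := by
      rw [u1 xs (Finset.notMem_erase _ _)]; exact hp1xs
    have himg : C.image ⇑p' = R := by rw [hR]; exact image_agree hout
    have hle : ∀ j ∈ C, p' j ≤ y0 := by
      intro j hj
      exact R.le_max' _ (himg ▸ Finset.mem_image_of_mem _ hj)
    refine ⟨p', ⟨hout, ?_, ?_⟩, ?_⟩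
    · intro j hj
      by_cases hjxs : j = xs
      · subst hjxs; rw [hp'xs]; exact hBxs
      · exact u2 j (Finset.mem_erase.mpr ⟨hjxs, hj⟩)
    · intro i hi j hj hij hBji
      by_cases hi' : i = xs
      · exfalso
        subst hi'
        rw [hp'xs] at hBji
        have hjK : j ∈ K := Finset.mem_filter.mpr ⟨hj, hBji⟩
        exact absurd (K.le_max' _ hjK) (not_le.mpr hij)
      · by_cases hj' : j = xs
        · subst hj'
          rw [hp'xs]
          refine lt_of_le_of_ne (hle i hi) (fun heq => hi' (p'.injective ?_))
          rw [heq, hp'xs]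
        · exact u3 i (Finset.mem_erase.mpr ⟨hi', hi⟩) j (Finset.mem_erase.mpr ⟨hj', hj⟩) hij hBji
    · rintro p'' ⟨v1, v2, v3⟩
      have himg'' : C.image ⇑p'' = R := by rw [hR]; exact image_agree v1
      have hy0R : y0 ∈ Finset.image (⇑p'') C := by
        rw [himg'', hy0]; exact R.max'_mem hRne
      obtain ⟨x, hxC, hx⟩ := Finset.mem_image.mp hy0R
      have hxBy0 : B x y0 := by rw [← hx]; exact v2 x hxC
      have hxK : x ∈ K := Finset.mem_filter.mpr ⟨hxC, hxBy0⟩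
      have hxxs : x ≤ xs := K.le_max' _ hxK
      have hp''le : ∀ j ∈ C, p'' j ≤ y0 := by
        intro j hj
        exact R.le_max' _ (himg'' ▸ Finset.mem_image_of_mem _ hj)
      have hx_eq : x = xs := by
        by_contra hne2
        have hlt : x < xs := lt_of_le_of_ne hxxs hne2
        have h1 : B xs (p'' x) := by rw [hx]; exact hBxs
        have h2 := v3 x hxC xs hxsC hlt h1
        rw [hx] at h2
        exact absurd (hp''le xs hxsC) (not_le.mpr h2)
      have hp''xs : p'' xs = y0 := hx_eq ▸ hx
      refine uuniq p'' ⟨?_, ?_, ?_⟩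
      · intro j hj
        by_cases hjxs : j = xs
        · subst hjxs; rw [hp''xs, hp1xs]
        · have hjC : j ∉ C := by
            intro hmem
            exact hj (Finset.mem_erase.mpr ⟨hjxs, hmem⟩)
          rw [v1 j hjC, hp1other j hjxs (fun h => hjC (h ▸ hx0C))]
      · intro j hj
        exact v2 j (Finset.mem_of_mem_erase hj)
      · intro i hi j hj hij hBji
        exact v3 i (Finset.mem_of_mem_erase hi) j (Finset.mem_of_mem_erase hj) hij hBji

lemma exists_unique_anti (B : Fin n → Fin n → Prop)
    (hB : ∀ ⦃x x' y y' : Fin n⦄, x' ≤ x → y' ≤ y → B x y → B x' y') :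
    ∀ (N : ℕ) (C : Finset (Fin n)), C.card = N → ∀ p : Equiv.Perm (Fin n),
      (∀ j ∈ C, B j (p j)) →
      ∃! p' : Equiv.Perm (Fin n),
        (∀ j ∉ C, p' j = p j) ∧ (∀ j ∈ C, B j (p' j)) ∧
        (∀ i ∈ C, ∀ j ∈ C, i < j → p' j < p' i) := by
  intro N
  induction N with
  | zero =>
    intro C hC p hp
    have hCe : C = ∅ := Finset.card_eq_zero.mp hC
    subst hCe
    refine ⟨p, ⟨fun j _ => rfl, by simp, by simp⟩, ?_⟩
    rintro p'' ⟨h1, -, -⟩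
    exact Equiv.ext fun x => h1 x (by simp)
  | succ N ih =>
    intro C hC p hp
    classical
    have hne : C.Nonempty := Finset.card_pos.mp (by omega)
    have hRne : (C.image ⇑p).Nonempty := hne.image _
    set R := C.image ⇑p with hR
    set y0 := R.max' hRne with hy0
    obtain ⟨x0, hx0C, hx0⟩ := Finset.mem_image.mp (R.max'_mem hRne)
    have hBx0y0 : B x0 y0 := by rw [hy0, ← hx0]; exact hp x0 hx0C
    set xs := C.min' hne with hxs
    have hxsC : xs ∈ C := C.min'_mem hne
    have hxsx0 : xs ≤ x0 := C.min'_le x0 hx0C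
    have hBxs : B xs y0 := hB hxsx0 le_rfl hBx0y0
    set p1 : Equiv.Perm (Fin n) := p * Equiv.swap xs x0 with hp1def
    have hp1xs : p1 xs = y0 := by
      simp only [hp1def, Equiv.Perm.mul_apply, Equiv.swap_apply_left]; exact hx0
    have hp1x0 : p1 x0 = p xs := by
      simp only [hp1def, Equiv.Perm.mul_apply, Equiv.swap_apply_right]
    have hp1other : ∀ j, j ≠ xs → j ≠ x0 → p1 j = p j := by
      intro j h1 h2
      simp only [hp1def, Equiv.Perm.mul_apply, Equiv.swap_apply_of_ne_of_ne h1 h2]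
    set C' := C.erase xs with hC'
    have hC'card : C'.card = N := by rw [hC']; rw [Finset.card_erase_of_mem hxsC, hC]; omega
    have hp1in : ∀ j ∈ C', B j (p1 j) := by
      intro j hj
      have hjC : j ∈ C := Finset.mem_of_mem_erase hj
      have hjxs : j ≠ xs := (Finset.mem_erase.mp hj).1
      by_cases hjx0 : j = x0
      · subst hjx0
        rw [hp1x0]
        have hple : p xs ≤ y0 := R.le_max' _ (Finset.mem_image_of_mem _ hxsC)
        exact hB le_rfl hple hBx0y0
      · rw [hp1other j hjxs hjx0]
        exact hp j hjC
    obtain ⟨p', ⟨u1, u2, u3⟩, uuniq⟩ := ih C' hC'card p1 hp1in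
    have hout : ∀ j ∉ C, p' j = p j := by
      intro j hj
      have hjC' : j ∉ C' := fun hmem => hj (Finset.mem_of_mem_erase hmem)
      rw [u1 j hjC']
      exact hp1other j (fun h => hj (h ▸ hxsC)) (fun h => hj (h ▸ hx0C))
    have hp'xs : p' xs = y0 := by
      rw [u1 xs (Finset.notMem_erase _ _)]; exact hp1xs
    have himg : C.image ⇑p' = R := by rw [hR]; exact image_agree hout
    have hle : ∀ j ∈ C, p' j ≤ y0 := by
      intro j hj
      exact R.le_max' _ (himg ▸ Finset.mem_image_of_mem _ hj)
    refine ⟨p', ⟨hout, ?_, ?_⟩, ?_⟩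
    · intro j hj
      by_cases hjxs : j = xs
      · subst hjxs; rw [hp'xs]; exact hBxs
      · exact u2 j (Finset.mem_erase.mpr ⟨hjxs, hj⟩)
    · intro i hi j hj hij
      by_cases hj' : j = xs
      · exfalso
        subst hj'
        exact absurd (C.min'_le i hi) (not_le.mpr hij)
      · by_cases hi' : i = xs
        · subst hi'
          rw [hp'xs]
          refine lt_of_le_of_ne (hle j hj) (fun heq => hj' (p'.injective ?_))
          rw [heq, hp'xs]
        · exact u3 i (Finset.mem_erase.mpr ⟨hi', hi⟩) j (Finset.mem_erase.mpr ⟨hj', hj⟩) hij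
    · rintro p'' ⟨v1, v2, v3⟩
      have himg'' : C.image ⇑p'' = R := by rw [hR]; exact image_agree v1
      have hy0R : y0 ∈ Finset.image (⇑p'') C := by
        rw [himg'', hy0]; exact R.max'_mem hRne
      obtain ⟨x, hxC, hx⟩ := Finset.mem_image.mp hy0R
      have hp''le : ∀ j ∈ C, p'' j ≤ y0 := by
        intro j hj
        exact R.le_max' _ (himg'' ▸ Finset.mem_image_of_mem _ hj)
      have hx_eq : x = xs := by
        by_contra hne2
        have hlt : xs < x := lt_of_le_of_ne (C.min'_le x hxC) (Ne.symm hne2)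
        have h2 := v3 xs hxsC x hxC hlt
        rw [hx] at h2
        exact absurd (hp''le xs hxsC) (not_le.mpr h2)
      have hp''xs : p'' xs = y0 := hx_eq ▸ hx
      refine uuniq p'' ⟨?_, ?_, ?_⟩
      · intro j hj
        by_cases hjxs : j = xs
        · subst hjxs; rw [hp''xs, hp1xs]
        · have hjC : j ∉ C := by
            intro hmem
            exact hj (Finset.mem_erase.mpr ⟨hjxs, hmem⟩)
          rw [v1 j hjC, hp1other j hjxs (fun h => hjC (h ▸ hx0C))]
      · intro j hj
        exact v2 j (Finset.mem_of_mem_erase hj)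
      · intro i hi j hj hij
        exact v3 i (Finset.mem_of_mem_erase hi) j (Finset.mem_of_mem_erase hj) hij


-- ASSEMBLY


variable (m : ℕ)

noncomputable def insideSet (p : Fin n → Fin n) : Finset (Fin n) :=
  @Finset.filter _ (fun j => NEC m p j (p j)) (Classical.decPred _) Finset.univ

lemma mem_insideSet {p : Fin n → Fin n} {j : Fin n} :
    j ∈ insideSet m p ↔ NEC m p j (p j) := by
  simp [insideSet]

lemma necB (p : Fin n → Fin n) :
    ∀ ⦃x x' y y' : Fin n⦄, x' ≤ x → y' ≤ y → NEC m p x y → NEC m p x' y' :=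
  fun _ _ _ _ hx hy h => nec_mono h hx hy

lemma exA (P : Equiv.Perm (Fin n)) :
    ∃! p' : Equiv.Perm (Fin n),
      (∀ j ∉ insideSet m ⇑P, p' j = P j) ∧ (∀ j ∈ insideSet m ⇑P, NEC m ⇑P j (p' j)) ∧
      (∀ i ∈ insideSet m ⇑P, ∀ j ∈ insideSet m ⇑P, i < j → NEC m ⇑P j (p' i) → p' i < p' j) :=
  exists_unique_av21 (NEC m ⇑P) (necB m ⇑P) _ _ rfl P (fun _ hj => (mem_insideSet m).mp hj)

lemma exB (P : Equiv.Perm (Fin n)) :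
    ∃! p' : Equiv.Perm (Fin n),
      (∀ j ∉ insideSet m ⇑P, p' j = P j) ∧ (∀ j ∈ insideSet m ⇑P, NEC m ⇑P j (p' j)) ∧
      (∀ i ∈ insideSet m ⇑P, ∀ j ∈ insideSet m ⇑P, i < j → p' j < p' i) :=
  exists_unique_anti (NEC m ⇑P) (necB m ⇑P) _ _ rfl P (fun _ hj => (mem_insideSet m).mp hj)

noncomputable def Phi (P : Equiv.Perm (Fin n)) : Equiv.Perm (Fin n) :=
  (exA m P).exists.choose

lemma Phi_spec (P : Equiv.Perm (Fin n)) :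
    (∀ j ∉ insideSet m ⇑P, Phi m P j = P j) ∧
    (∀ j ∈ insideSet m ⇑P, NEC m ⇑P j (Phi m P j)) ∧
    (∀ i ∈ insideSet m ⇑P, ∀ j ∈ insideSet m ⇑P, i < j →
      NEC m ⇑P j (Phi m P i) → Phi m P i < Phi m P j) :=
  (exA m P).exists.choose_spec

noncomputable def Psi (P : Equiv.Perm (Fin n)) : Equiv.Perm (Fin n) :=
  (exB m P).exists.choose

lemma Psi_spec (P : Equiv.Perm (Fin n)) :
    (∀ j ∉ insideSet m ⇑P, Psi m P j = P j) ∧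
    (∀ j ∈ insideSet m ⇑P, NEC m ⇑P j (Psi m P j)) ∧
    (∀ i ∈ insideSet m ⇑P, ∀ j ∈ insideSet m ⇑P, i < j → Psi m P j < Psi m P i) :=
  (exB m P).exists.choose_spec

lemma shape_generic {P p' : Equiv.Perm (Fin n)}
    (hout : ∀ j ∉ insideSet m ⇑P, p' j = P j)
    (hin : ∀ j ∈ insideSet m ⇑P, NEC m ⇑P j (p' j)) :
    (∀ x y : Fin n, NEC m ⇑p' x y ↔ NEC m ⇑P x y) ∧
      insideSet m ⇑p' = insideSet m ⇑P := by
  have hsh : ∀ x y : Fin n, NEC m ⇑p' x y ↔ NEC m ⇑P x y :=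
    nec_congr hout (fun j => mem_insideSet m) hin
  refine ⟨hsh, ?_⟩
  ext j
  rw [mem_insideSet, mem_insideSet, hsh]
  by_cases hj : j ∈ insideSet m ⇑P
  · constructor
    · intro _; exact (mem_insideSet m).mp hj
    · intro _; exact hin j hj
  · rw [hout j hj]

lemma phi_avoidsB (P : Equiv.Perm (Fin n)) :
    ¬ ∃ i j : Fin n, i < j ∧ Phi m P j < Phi m P i ∧ NEC m ⇑(Phi m P) j (Phi m P i) := by
  obtain ⟨hout, hin, hav21⟩ := Phi_spec m P
  obtain ⟨hsh, _⟩ := shape_generic m hout hin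
  rintro ⟨i, j, hij, hlt, hnec⟩
  rw [hsh] at hnec
  have hiC : i ∈ insideSet m ⇑P := by
    by_contra hiC
    have h1 : NEC m ⇑P i (Phi m P i) := nec_mono hnec hij.le le_rfl
    rw [hout i hiC] at h1
    exact hiC ((mem_insideSet m).mpr h1)
  have hjC : j ∈ insideSet m ⇑P := by
    by_contra hjC
    have h1 : NEC m ⇑P j (Phi m P j) := nec_mono hnec le_rfl hlt.le
    rw [hout j hjC] at h1
    exact hjC ((mem_insideSet m).mpr h1)
  exact absurd (hav21 i hiC j hjC hij hnec) (not_lt.mpr hlt.le)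

lemma psi_avoidsA (P : Equiv.Perm (Fin n)) :
    ¬ ∃ i j : Fin n, i < j ∧ Psi m P i < Psi m P j ∧ NEC m ⇑(Psi m P) j (Psi m P j) := by
  obtain ⟨hout, hin, hanti⟩ := Psi_spec m P
  obtain ⟨hsh, _⟩ := shape_generic m hout hin
  rintro ⟨i, j, hij, hlt, hnec⟩
  rw [hsh] at hnec
  have hjC : j ∈ insideSet m ⇑P := by
    by_contra hjC
    rw [hout j hjC] at hnec
    exact hjC ((mem_insideSet m).mpr hnec)
  have hiC : i ∈ insideSet m ⇑P := by
    by_contra hiC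
    have h1 : NEC m ⇑P i (Psi m P i) := nec_mono hnec hij.le hlt.le
    rw [hout i hiC] at h1
    exact hiC ((mem_insideSet m).mpr h1)
  exact absurd (hanti i hiC j hjC hij) (not_lt.mpr hlt.le)

lemma psi_phi (P : Equiv.Perm (Fin n))
    (havA : ¬ ∃ i j : Fin n, i < j ∧ P i < P j ∧ NEC m ⇑P j (P j)) :
    Psi m (Phi m P) = P := by
  obtain ⟨hout, hin, _⟩ := Phi_spec m P
  obtain ⟨hsh, hins⟩ := shape_generic m hout hin
  set Q := Phi m P with hQ
  refine ((exB m Q).unique (Psi_spec m Q)) ⟨?_, ?_, ?_⟩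
  · intro j hj
    rw [hins] at hj
    exact (hout j hj).symm
  · intro j hj
    rw [hins] at hj
    rw [hsh j (P j)]
    exact (mem_insideSet m).mp hj
  · intro i hi j hj hij
    rw [hins] at hi hj
    rcases lt_trichotomy (P j) (P i) with h | h | h
    · exact h
    · exact absurd (P.injective h) (fun he => by rw [he] at hij; exact lt_irrefl _ hij)
    · exact absurd ⟨i, j, hij, h, (mem_insideSet m).mp hj⟩ havA

lemma phi_psi (P : Equiv.Perm (Fin n))
    (havB : ¬ ∃ i j : Fin n, i < j ∧ P j < P i ∧ NEC m ⇑P j (P i)) :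
    Phi m (Psi m P) = P := by
  obtain ⟨hout, hin, _⟩ := Psi_spec m P
  obtain ⟨hsh, hins⟩ := shape_generic m hout hin
  set Q := Psi m P with hQ
  refine ((exA m Q).unique (Phi_spec m Q)) ⟨?_, ?_, ?_⟩
  · intro j hj
    rw [hins] at hj
    exact (hout j hj).symm
  · intro j hj
    rw [hins] at hj
    rw [hsh j (P j)]
    exact (mem_insideSet m).mp hj
  · intro i hi j hj hij hnec
    rw [hins] at hi hj
    rw [hsh j (P i)] at hnec
    rcases lt_trichotomy (P i) (P j) with h | h | h
    · exact h
    · exact absurd (P.injective h) (fun he => by rw [he] at hij; exact lt_irrefl _ hij)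
    · exact absurd ⟨i, j, hij, h, hnec⟩ havB

lemma ofBij_coe (G : Equiv.Perm (Fin n)) (h : Function.Bijective ⇑G) :
    Equiv.ofBijective ⇑G h = G := Equiv.ext fun _ => rfl

end NECsec

theorem main (m n : ℕ) :
    Nat.card {p : Fin n → Fin n // Function.Bijective p ∧ Avoids p (id : Fin (m+3) → Fin (m+3))} =
    Nat.card {p : Fin n → Fin n // Function.Bijective p ∧
      Avoids p ⇑(Equiv.swap (⟨0, by omega⟩ : Fin (m+3)) ⟨1, by omega⟩)} := by
  apply Nat.card_congr
  refine
    { toFun := fun x => ⟨⇑(Phi m (Equiv.ofBijective x.1 x.2.1)), (Phi m _).bijective, ?_⟩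
      invFun := fun x => ⟨⇑(Psi m (Equiv.ofBijective x.1 x.2.1)), (Psi m _).bijective, ?_⟩
      left_inv := ?_
      right_inv := ?_ }
  · intro hcont
    exact phi_avoidsB m _ (contains_swap_iff.mp hcont)
  · intro hcont
    exact psi_avoidsA m _ (contains_id_iff.mp hcont)
  · rintro ⟨p, hb, hav⟩
    apply Subtype.ext
    dsimp only
    rw [ofBij_coe]
    rw [psi_phi m (Equiv.ofBijective p hb) (fun hex => hav (contains_id_iff.mpr hex))]
    rfl
  · rintro ⟨p, hb, hav⟩
    apply Subtype.ext
    dsimp only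
    rw [ofBij_coe]
    rw [phi_psi m (Equiv.ofBijective p hb) (fun hex => hav (contains_swap_iff.mpr hex))]
    rfl

theorem stmt13 (k n : ℕ) (hk : 3 ≤ k) (hn : 0 < n) :
    Nat.card {p : Fin n → Fin n // Function.Bijective p ∧ Avoids p (id : Fin k → Fin k)} =
    Nat.card {p : Fin n → Fin n // Function.Bijective p ∧
      Avoids p ⇑(Equiv.swap (⟨0, by omega⟩ : Fin k) ⟨1, by omega⟩)} := by
  obtain ⟨m, rfl⟩ : ∃ m, k = m + 3 := ⟨k - 3, by omega⟩
  exact main m n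
end

section
/- For every positive integer n, the number of alternating permutations of length n avoiding 1234 equals the number of alternating permutations of length n avoiding 2134. -/
open Function

namespace Lew
variable {n : ℕ}

section
variable {α : Type*} {x1 x2 x3 x4 : α}
lemma vec4_mk0 (h : (0:ℕ) < 4) : ![x1,x2,x3,x4] ⟨0,h⟩ = x1 := rfl
lemma vec4_mk1 (h : (1:ℕ) < 4) : ![x1,x2,x3,x4] ⟨1,h⟩ = x2 := rfl
lemma vec4_mk2 (h : (2:ℕ) < 4) : ![x1,x2,x3,x4] ⟨2,h⟩ = x3 := rfl
lemma vec4_mk3 (h : (3:ℕ) < 4) : ![x1,x2,x3,x4] ⟨3,h⟩ = x4 := rfl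
end

def Crit (p : Fin n → Fin n) (i v : Fin n) : Prop :=
  ∃ j1 j2 : Fin n, i < j1 ∧ j1 < j2 ∧ v < p j1 ∧ p j1 < p j2

lemma crit_mono {p : Fin n → Fin n} {i v i' v' : Fin n} (h : Crit p i v)
    (hi : i' ≤ i) (hv : v' ≤ v) : Crit p i' v' := by
  obtain ⟨j1, j2, h1, h2, h3, h4⟩ := h
  exact ⟨j1, j2, lt_of_le_of_lt hi h1, h2, lt_of_le_of_lt hv h3, h4⟩

lemma strictMono_vec4 {i1 i2 i3 i4 : Fin n} (h12 : i1 < i2) (h23 : i2 < i3)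
    (h34 : i3 < i4) : StrictMono (![i1, i2, i3, i4]) := by
  rw [Fin.strictMono_iff_lt_succ]
  intro i
  fin_cases i
  · exact h12
  · exact h23
  · exact h34

lemma contains1234_iff (p : Fin n → Fin n) :
    Contains p ![0, 1, 2, 3] ↔ ∃ i j : Fin n, i < j ∧ p i < p j ∧ Crit p j (p j) := by
  constructor
  · rintro ⟨f, hf, hiff⟩
    refine ⟨f 0, f 1, hf (by decide), ?_, f 2, f 3, hf (by decide), hf (by decide), ?_, ?_⟩
    · exact (hiff 0 1).1 (by decide)
    · exact (hiff 1 2).1 (by decide)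
    · exact (hiff 2 3).1 (by decide)
  · rintro ⟨i, j, hij, hpij, j1, j2, ha1, ha2, ha3, ha4⟩
    refine ⟨![i, j, j1, j2], strictMono_vec4 hij ha1 ha2, ?_⟩
    simp only [Fin.lt_def] at hpij ha3 ha4
    intro a b
    fin_cases a <;> fin_cases b <;>
      simp only [vec4_mk0, vec4_mk1, vec4_mk2, vec4_mk3] <;>
      first
        | (refine iff_of_true (by decide) ?_; simp only [Fin.lt_def]; omega)
        | (refine iff_of_false (by decide) ?_; simp only [Fin.lt_def, not_lt]; omega)

lemma contains2134_iff (p : Fin n → Fin n) :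
    Contains p ![1, 0, 2, 3] ↔ ∃ i j : Fin n, i < j ∧ p j < p i ∧ Crit p j (p i) := by
  constructor
  · rintro ⟨f, hf, hiff⟩
    refine ⟨f 0, f 1, hf (by decide), ?_, f 2, f 3, hf (by decide), hf (by decide), ?_, ?_⟩
    · exact (hiff 1 0).1 (by decide)
    · exact (hiff 0 2).1 (by decide)
    · exact (hiff 2 3).1 (by decide)
  · rintro ⟨i, j, hij, hpij, j1, j2, ha1, ha2, ha3, ha4⟩
    refine ⟨![i, j, j1, j2], strictMono_vec4 hij ha1 ha2, ?_⟩
    simp only [Fin.lt_def] at hpij ha3 ha4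
    intro a b
    fin_cases a <;> fin_cases b <;>
      simp only [vec4_mk0, vec4_mk1, vec4_mk2, vec4_mk3] <;>
      first
        | (refine iff_of_true (by decide) ?_; simp only [Fin.lt_def]; omega)
        | (refine iff_of_false (by decide) ?_; simp only [Fin.lt_def, not_lt]; omega)

lemma crit_witness {p : Fin n → Fin n} {i v : Fin n} (h : Crit p i v) :
    ∃ j1 j2 : Fin n, i < j1 ∧ j1 < j2 ∧ v < p j1 ∧ p j1 < p j2 ∧
      ¬ Crit p j1 (p j1) ∧ ¬ Crit p j2 (p j2) := by
  classical
  set W : Finset (Fin n × Fin n) :=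
    Finset.univ.filter (fun z => i < z.1 ∧ z.1 < z.2 ∧ v < p z.1 ∧ p z.1 < p z.2) with hW
  have hWne : W.Nonempty := by
    obtain ⟨j1, j2, h1, h2, h3, h4⟩ := h
    exact ⟨(j1, j2), by simp [hW, h1, h2, h3, h4]⟩
  obtain ⟨z, hzW, hzmax⟩ := W.exists_max_image (fun z => z.1.1 * n + z.2.1) hWne
  simp only [hW, Finset.mem_filter, Finset.mem_univ, true_and] at hzW
  obtain ⟨h1, h2, h3, h4⟩ := hzW
  refine ⟨z.1, z.2, h1, h2, h3, h4, ?_, ?_⟩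
  · rintro ⟨l1, l2, g1, g2, g3, g4⟩
    have hmem : (l1, l2) ∈ W := by
      simp only [hW, Finset.mem_filter, Finset.mem_univ, true_and]
      exact ⟨lt_trans h1 g1, g2, lt_trans h3 g3, g4⟩
    have := hzmax _ hmem
    simp only at this
    have hl2 : l2.1 < n := l2.2
    have hz2 : z.2.1 < n := z.2.2
    have : l1.1 * n + l2.1 ≤ z.1.1 * n + z.2.1 := this
    have hg1 : z.1.1 < l1.1 := g1
    nlinarith [z.1.2, l1.2]
  · rintro ⟨l1, l2, g1, g2, g3, g4⟩
    have hmem : (z.1, l1) ∈ W := by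
      simp only [hW, Finset.mem_filter, Finset.mem_univ, true_and]
      exact ⟨h1, lt_trans h2 g1, h3, lt_trans h4 g3⟩
    have := hzmax _ hmem
    simp only at this
    have : z.1.1 * n + l1.1 ≤ z.1.1 * n + z.2.1 := this
    have hg1 : z.2.1 < l1.1 := g1
    omega

def DownClosed (B : Fin n → Fin n → Prop) : Prop :=
  ∀ i v i' v', B i v → i' ≤ i → v' ≤ v → B i' v'

def IsPl (B : Fin n → Fin n → Prop) (cols rows : Finset (Fin n)) (f : Fin n → Fin n) : Prop :=
  (∀ i ∈ cols, f i ∈ rows) ∧ (∀ i ∈ cols, B i (f i)) ∧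
  (∀ i ∈ cols, ∀ j ∈ cols, f i = f j → i = j) ∧ (∀ r ∈ rows, ∃ i ∈ cols, f i = r)

def No21 (B : Fin n → Fin n → Prop) (cols : Finset (Fin n)) (f : Fin n → Fin n) : Prop :=
  ∀ i ∈ cols, ∀ j ∈ cols, i < j → f j < f i → ¬ B j (f i)

def Decr (cols : Finset (Fin n)) (f : Fin n → Fin n) : Prop :=
  ∀ i ∈ cols, ∀ j ∈ cols, i < j → f j < f i

lemma swap_pl {B : Fin n → Fin n → Prop} (hB : DownClosed B) {cols rows : Finset (Fin n)}
    {g : Fin n → Fin n} (hg : IsPl B cols rows g) {c1 c2 : Fin n} (hc1 : c1 ∈ cols)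
    (hc2 : c2 ∈ cols) (hle : c1 ≤ c2) (hB2 : B c2 (g c1)) :
    IsPl B cols rows (g ∘ (Equiv.swap c1 c2)) := by
  obtain ⟨hmem, hBg, hinj, hsur⟩ := hg
  have hswapmem : ∀ i ∈ cols, (Equiv.swap c1 c2) i ∈ cols := by
    intro i hi
    rcases Equiv.swap_apply_def c1 c2 i with _
    by_cases h1 : i = c1
    · simp [h1, Equiv.swap_apply_left, hc2]
    · by_cases h2 : i = c2
      · simp [h2, Equiv.swap_apply_right, hc1]
      · simp [Equiv.swap_apply_of_ne_of_ne h1 h2, hi]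
  refine ⟨fun i hi => hmem _ (hswapmem i hi), ?_, ?_, ?_⟩
  · intro i hi
    by_cases h1 : i = c1
    · subst h1
      simp only [Function.comp_apply, Equiv.swap_apply_left]
      exact hB _ _ _ _ (hBg c2 hc2) hle le_rfl
    · by_cases h2 : i = c2
      · subst h2
        simpa only [Function.comp_apply, Equiv.swap_apply_right] using hB2
      · simpa only [Function.comp_apply, Equiv.swap_apply_of_ne_of_ne h1 h2] using hBg i hi
  · intro i hi j hj hij
    have := hinj _ (hswapmem i hi) _ (hswapmem j hj) hij
    exact (Equiv.swap c1 c2).injective this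
  · intro r hr
    obtain ⟨i, hi, hgi⟩ := hsur r hr
    refine ⟨(Equiv.swap c1 c2) i, hswapmem i hi, ?_⟩
    simp [hgi]

lemma pl_restrict {B : Fin n → Fin n → Prop} {cols rows : Finset (Fin n)}
    {g : Fin n → Fin n} (hg : IsPl B cols rows g) {c : Fin n} {r : Fin n}
    (hc : c ∈ cols) (hgc : g c = r) :
    IsPl B (cols.erase c) (rows.erase r) g := by
  obtain ⟨hmem, hBg, hinj, hsur⟩ := hg
  refine ⟨?_, fun i hi => hBg i (Finset.mem_of_mem_erase hi), ?_, ?_⟩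
  · intro i hi
    have hic := Finset.ne_of_mem_erase hi
    have hi' := Finset.mem_of_mem_erase hi
    refine Finset.mem_erase.2 ⟨?_, hmem i hi'⟩
    intro h
    exact hic (hinj i hi' c hc (by rw [h, hgc]))
  · intro i hi j hj h
    exact hinj i (Finset.mem_of_mem_erase hi) j (Finset.mem_of_mem_erase hj) h
  · intro s hs
    obtain ⟨i, hi, hgi⟩ := hsur s (Finset.mem_of_mem_erase hs)
    refine ⟨i, Finset.mem_erase.2 ⟨?_, hi⟩, hgi⟩
    rintro rfl
    exact (Finset.ne_of_mem_erase hs) (by rw [← hgi, hgc])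

lemma rows_empty {B : Fin n → Fin n → Prop} {cols rows : Finset (Fin n)}
    {g : Fin n → Fin n} (hg : IsPl B cols rows g) (h : cols.card = 0) : rows = ∅ := by
  rw [Finset.card_eq_zero] at h
  subst h
  rcases Finset.eq_empty_or_nonempty rows with h | ⟨r, hr⟩
  · exact h
  · obtain ⟨i, hi, _⟩ := hg.2.2.2 r hr
    simp at hi

theorem exists_no21 {B : Fin n → Fin n → Prop} (hB : DownClosed B) :
    ∀ (k : ℕ) (cols rows : Finset (Fin n)) (g : Fin n → Fin n), cols.card = k →
      IsPl B cols rows g → ∃ f, IsPl B cols rows f ∧ No21 B cols f := by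
  intro k
  induction k with
  | zero =>
    intro cols rows g hk hg
    refine ⟨g, hg, ?_⟩
    intro i hi
    rw [Finset.card_eq_zero] at hk; subst hk; simp at hi
  | succ k ih =>
    intro cols rows g hk hg
    classical
    have hcne : cols.Nonempty := Finset.card_pos.1 (by omega)
    have hrne : rows.Nonempty := ⟨g hcne.choose, hg.1 _ hcne.choose_spec⟩
    set rstar := rows.max' hrne with hrstar
    obtain ⟨c1, hc1, hgc1⟩ := hg.2.2.2 rstar (rows.max'_mem hrne)
    set S := cols.filter (fun c => B c rstar) with hS
    have hc1S : c1 ∈ S := by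
      simp only [hS, Finset.mem_filter]
      exact ⟨hc1, by rw [← hgc1]; exact hg.2.1 c1 hc1⟩
    have hSne : S.Nonempty := ⟨c1, hc1S⟩
    set cstar := S.max' hSne with hcstar
    have hcstarS : cstar ∈ S := S.max'_mem hSne
    have hcstarcols : cstar ∈ cols := (Finset.mem_filter.1 hcstarS).1
    have hBcstar : B cstar rstar := (Finset.mem_filter.1 hcstarS).2
    have hc1le : c1 ≤ cstar := S.le_max' c1 hc1S
    have hg2 : IsPl B cols rows (g ∘ (Equiv.swap c1 cstar)) :=
      swap_pl hB hg hc1 hcstarcols hc1le (by rw [hgc1]; exact hBcstar)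
    set g2 := g ∘ (Equiv.swap c1 cstar) with hg2def
    have hg2cstar : g2 cstar = rstar := by
      simp [hg2def, Equiv.swap_apply_right, hgc1]
    have hrestr : IsPl B (cols.erase cstar) (rows.erase rstar) g2 :=
      pl_restrict hg2 hcstarcols hg2cstar
    have hcard : (cols.erase cstar).card = k := by
      rw [Finset.card_erase_of_mem hcstarcols]; omega
    obtain ⟨f', hf'pl, hf'no21⟩ := ih _ _ g2 hcard hrestr
    refine ⟨Function.update f' cstar rstar, ⟨?_, ?_, ?_, ?_⟩, ?_⟩
    · intro i hi
      by_cases h : i = cstar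
      · subst h; rw [Function.update_self]; exact rows.max'_mem hrne
      · rw [Function.update_of_ne h]
        exact Finset.mem_of_mem_erase (hf'pl.1 i (Finset.mem_erase.2 ⟨h, hi⟩))
    · intro i hi
      by_cases h : i = cstar
      · subst h; rw [Function.update_self]; exact hBcstar
      · rw [Function.update_of_ne h]
        exact hf'pl.2.1 i (Finset.mem_erase.2 ⟨h, hi⟩)
    · intro i hi j hj hij
      by_cases h1 : i = cstar <;> by_cases h2 : j = cstar
      · rw [h1, h2]
      · exfalso
        rw [h1, Function.update_self, Function.update_of_ne h2] at hij
        have := hf'pl.1 j (Finset.mem_erase.2 ⟨h2, hj⟩)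
        exact (Finset.ne_of_mem_erase this) hij.symm
      · exfalso
        rw [h2, Function.update_self, Function.update_of_ne h1] at hij
        have := hf'pl.1 i (Finset.mem_erase.2 ⟨h1, hi⟩)
        exact (Finset.ne_of_mem_erase this) hij
      · rw [Function.update_of_ne h1, Function.update_of_ne h2] at hij
        exact hf'pl.2.2.1 i (Finset.mem_erase.2 ⟨h1, hi⟩) j (Finset.mem_erase.2 ⟨h2, hj⟩) hij
    · intro r hr
      by_cases h : r = rstar
      · exact ⟨cstar, hcstarcols, by rw [Function.update_self, h]⟩
      · obtain ⟨i, hi, hfi⟩ := hf'pl.2.2.2 r (Finset.mem_erase.2 ⟨h, hr⟩)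
        have hine := Finset.ne_of_mem_erase hi
        exact ⟨i, Finset.mem_of_mem_erase hi, by rw [Function.update_of_ne hine]; exact hfi⟩
    · -- No21
      intro i hi j hj hij hfji
      by_cases h2 : j = cstar
      · exfalso
        subst h2
        have h1 : i ≠ cstar := ne_of_lt hij
        rw [Function.update_self, Function.update_of_ne h1] at hfji
        have hmem : f' i ∈ rows.erase rstar := hf'pl.1 i (Finset.mem_erase.2 ⟨h1, hi⟩)
        have : f' i ≤ rstar := rows.le_max' _ (Finset.mem_of_mem_erase hmem)
        exact absurd hfji (not_lt.2 this)
      · by_cases h1 : i = cstar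
        · subst h1
          rw [Function.update_self]
          intro hBj
          have : j ∈ S := Finset.mem_filter.2 ⟨hj, hBj⟩
          exact absurd (S.le_max' j this) (not_le.2 hij)
        · rw [Function.update_of_ne h1] at hfji ⊢
          rw [Function.update_of_ne h2] at hfji
          exact hf'no21 i (Finset.mem_erase.2 ⟨h1, hi⟩) j (Finset.mem_erase.2 ⟨h2, hj⟩) hij hfji

theorem no21_unique {B : Fin n → Fin n → Prop} :
    ∀ (k : ℕ) (cols rows : Finset (Fin n)) (f1 f2 : Fin n → Fin n), cols.card = k →
      IsPl B cols rows f1 → No21 B cols f1 → IsPl B cols rows f2 → No21 B cols f2 →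
      ∀ i ∈ cols, f1 i = f2 i := by
  intro k
  induction k with
  | zero =>
    intro cols rows f1 f2 hk _ _ _ _ i hi
    rw [Finset.card_eq_zero] at hk; subst hk; simp at hi
  | succ k ih =>
    intro cols rows f1 f2 hk hp1 hn1 hp2 hn2
    classical
    have hcne : cols.Nonempty := Finset.card_pos.1 (by omega)
    have hrne : rows.Nonempty := ⟨f1 hcne.choose, hp1.1 _ hcne.choose_spec⟩
    set rstar := rows.max' hrne with hrstar
    set S := cols.filter (fun c => B c rstar) with hS
    have key : ∀ f : Fin n → Fin n, IsPl B cols rows f → No21 B cols f →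
        ∃ hSne : S.Nonempty, f (S.max' hSne) = rstar := by
      intro f hp hn
      obtain ⟨c0, hc0, hfc0⟩ := hp.2.2.2 rstar (rows.max'_mem hrne)
      have hc0S : c0 ∈ S := Finset.mem_filter.2 ⟨hc0, by rw [← hfc0]; exact hp.2.1 c0 hc0⟩
      have hSne : S.Nonempty := ⟨c0, hc0S⟩
      refine ⟨hSne, ?_⟩
      set cstar := S.max' hSne with hcs
      have hcstarS : cstar ∈ S := S.max'_mem hSne
      have hcstarcols : cstar ∈ cols := (Finset.mem_filter.1 hcstarS).1
      have hBcstar : B cstar rstar := (Finset.mem_filter.1 hcstarS).2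
      by_cases h : c0 = cstar
      · rw [← h]; exact hfc0
      · exfalso
        have hlt : c0 < cstar := lt_of_le_of_ne (S.le_max' c0 hc0S) h
        have hne : f cstar ≠ rstar := by
          intro he
          exact h (hp.2.2.1 c0 hc0 cstar hcstarcols (by rw [hfc0, he]))
        have : f cstar < rstar := lt_of_le_of_ne (rows.le_max' _ (hp.1 _ hcstarcols)) hne
        refine hn c0 hc0 cstar hcstarcols hlt (by rw [hfc0]; exact this) ?_
        rw [hfc0]; exact hBcstar
    obtain ⟨hSne, h1⟩ := key f1 hp1 hn1
    obtain ⟨_, h2⟩ := key f2 hp2 hn2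
    set cstar := S.max' hSne with hcs
    have hcstarcols : cstar ∈ cols := (Finset.mem_filter.1 (S.max'_mem hSne)).1
    have hcard : (cols.erase cstar).card = k := by
      rw [Finset.card_erase_of_mem hcstarcols]; omega
    have hr1 : IsPl B (cols.erase cstar) (rows.erase rstar) f1 := pl_restrict hp1 hcstarcols h1
    have hr2 : IsPl B (cols.erase cstar) (rows.erase rstar) f2 := pl_restrict hp2 hcstarcols h2
    have hn1' : No21 B (cols.erase cstar) f1 := fun i hi j hj =>
      hn1 i (Finset.mem_of_mem_erase hi) j (Finset.mem_of_mem_erase hj)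
    have hn2' : No21 B (cols.erase cstar) f2 := fun i hi j hj =>
      hn2 i (Finset.mem_of_mem_erase hi) j (Finset.mem_of_mem_erase hj)
    intro i hi
    by_cases h : i = cstar
    · rw [h, h1, h2]
    · exact ih _ _ f1 f2 hcard hr1 hn1' hr2 hn2' i (Finset.mem_erase.2 ⟨h, hi⟩)

theorem exists_decr {B : Fin n → Fin n → Prop} (hB : DownClosed B) :
    ∀ (k : ℕ) (cols rows : Finset (Fin n)) (g : Fin n → Fin n), cols.card = k →
      IsPl B cols rows g → ∃ f, IsPl B cols rows f ∧ Decr cols f := by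
  intro k
  induction k with
  | zero =>
    intro cols rows g hk hg
    refine ⟨g, hg, ?_⟩
    intro i hi
    rw [Finset.card_eq_zero] at hk; subst hk; simp at hi
  | succ k ih =>
    intro cols rows g hk hg
    classical
    have hcne : cols.Nonempty := Finset.card_pos.1 (by omega)
    have hrne : rows.Nonempty := ⟨g hcne.choose, hg.1 _ hcne.choose_spec⟩
    set rmin := rows.min' hrne with hrmin
    set cmax := cols.max' hcne with hcmax
    have hcmaxcols : cmax ∈ cols := cols.max'_mem hcne
    obtain ⟨c1, hc1, hgc1⟩ := hg.2.2.2 rmin (rows.min'_mem hrne)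
    have hc1le : c1 ≤ cmax := cols.le_max' c1 hc1
    have hBcm : B cmax rmin := by
      refine hB cmax (g cmax) cmax rmin (hg.2.1 cmax hcmaxcols) le_rfl ?_
      exact rows.min'_le _ (hg.1 cmax hcmaxcols)
    have hg2 : IsPl B cols rows (g ∘ (Equiv.swap c1 cmax)) :=
      swap_pl hB hg hc1 hcmaxcols hc1le
        (hB cmax (g cmax) cmax (g c1) (hg.2.1 cmax hcmaxcols) le_rfl
          (by rw [hgc1]; exact rows.min'_le _ (hg.1 cmax hcmaxcols)))
    set g2 := g ∘ (Equiv.swap c1 cmax) with hg2def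
    have hg2cm : g2 cmax = rmin := by
      simp [hg2def, Equiv.swap_apply_right, hgc1]
    have hrestr : IsPl B (cols.erase cmax) (rows.erase rmin) g2 :=
      pl_restrict hg2 hcmaxcols hg2cm
    have hcard : (cols.erase cmax).card = k := by
      rw [Finset.card_erase_of_mem hcmaxcols]; omega
    obtain ⟨f', hf'pl, hf'd⟩ := ih _ _ g2 hcard hrestr
    refine ⟨Function.update f' cmax rmin, ⟨?_, ?_, ?_, ?_⟩, ?_⟩
    · intro i hi
      by_cases h : i = cmax
      · subst h; rw [Function.update_self]; exact rows.min'_mem hrne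
      · rw [Function.update_of_ne h]
        exact Finset.mem_of_mem_erase (hf'pl.1 i (Finset.mem_erase.2 ⟨h, hi⟩))
    · intro i hi
      by_cases h : i = cmax
      · subst h; rw [Function.update_self]; exact hBcm
      · rw [Function.update_of_ne h]
        exact hf'pl.2.1 i (Finset.mem_erase.2 ⟨h, hi⟩)
    · intro i hi j hj hij
      by_cases h1 : i = cmax <;> by_cases h2 : j = cmax
      · rw [h1, h2]
      · exfalso
        rw [h1, Function.update_self, Function.update_of_ne h2] at hij
        have := hf'pl.1 j (Finset.mem_erase.2 ⟨h2, hj⟩)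
        exact (Finset.ne_of_mem_erase this) hij.symm
      · exfalso
        rw [h2, Function.update_self, Function.update_of_ne h1] at hij
        have := hf'pl.1 i (Finset.mem_erase.2 ⟨h1, hi⟩)
        exact (Finset.ne_of_mem_erase this) hij
      · rw [Function.update_of_ne h1, Function.update_of_ne h2] at hij
        exact hf'pl.2.2.1 i (Finset.mem_erase.2 ⟨h1, hi⟩) j (Finset.mem_erase.2 ⟨h2, hj⟩) hij
    · intro r hr
      by_cases h : r = rmin
      · exact ⟨cmax, hcmaxcols, by rw [Function.update_self, h]⟩
      · obtain ⟨i, hi, hfi⟩ := hf'pl.2.2.2 r (Finset.mem_erase.2 ⟨h, hr⟩)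
        have hine := Finset.ne_of_mem_erase hi
        exact ⟨i, Finset.mem_of_mem_erase hi, by rw [Function.update_of_ne hine]; exact hfi⟩
    · intro i hi j hj hij
      have h1 : i ≠ cmax := by
        intro h; subst h
        exact absurd hij (not_lt.2 (cols.le_max' j hj))
      by_cases h2 : j = cmax
      · subst h2
        rw [Function.update_self, Function.update_of_ne h1]
        have hmem : f' i ∈ rows.erase rmin := hf'pl.1 i (Finset.mem_erase.2 ⟨h1, hi⟩)
        exact lt_of_le_of_ne (rows.min'_le _ (Finset.mem_of_mem_erase hmem))
          (Ne.symm (Finset.ne_of_mem_erase hmem))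
      · rw [Function.update_of_ne h1, Function.update_of_ne h2]
        exact hf'd i (Finset.mem_erase.2 ⟨h1, hi⟩) j (Finset.mem_erase.2 ⟨h2, hj⟩) hij

theorem decr_unique {B : Fin n → Fin n → Prop} :
    ∀ (k : ℕ) (cols rows : Finset (Fin n)) (f1 f2 : Fin n → Fin n), cols.card = k →
      IsPl B cols rows f1 → Decr cols f1 → IsPl B cols rows f2 → Decr cols f2 →
      ∀ i ∈ cols, f1 i = f2 i := by
  intro k
  induction k with
  | zero =>
    intro cols rows f1 f2 hk _ _ _ _ i hi
    rw [Finset.card_eq_zero] at hk; subst hk; simp at hi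
  | succ k ih =>
    intro cols rows f1 f2 hk hp1 hd1 hp2 hd2
    classical
    have hcne : cols.Nonempty := Finset.card_pos.1 (by omega)
    have hrne : rows.Nonempty := ⟨f1 hcne.choose, hp1.1 _ hcne.choose_spec⟩
    set rmin := rows.min' hrne with hrmin
    set cmax := cols.max' hcne with hcmax
    have hcmaxcols : cmax ∈ cols := cols.max'_mem hcne
    have key : ∀ f : Fin n → Fin n, IsPl B cols rows f → Decr cols f → f cmax = rmin := by
      intro f hp hd
      obtain ⟨c0, hc0, hfc0⟩ := hp.2.2.2 rmin (rows.min'_mem hrne)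
      by_cases h : c0 = cmax
      · rw [← h]; exact hfc0
      · exfalso
        have hlt : c0 < cmax := lt_of_le_of_ne (cols.le_max' c0 hc0) h
        have := hd c0 hc0 cmax hcmaxcols hlt
        rw [hfc0] at this
        exact absurd (rows.min'_le _ (hp.1 cmax hcmaxcols)) (not_le.2 this)
    have h1 := key f1 hp1 hd1
    have h2 := key f2 hp2 hd2
    have hcard : (cols.erase cmax).card = k := by
      rw [Finset.card_erase_of_mem hcmaxcols]; omega
    have hr1 := pl_restrict hp1 hcmaxcols h1
    have hr2 := pl_restrict hp2 hcmaxcols h2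
    have hd1' : Decr (cols.erase cmax) f1 := fun i hi j hj =>
      hd1 i (Finset.mem_of_mem_erase hi) j (Finset.mem_of_mem_erase hj)
    have hd2' : Decr (cols.erase cmax) f2 := fun i hi j hj =>
      hd2 i (Finset.mem_of_mem_erase hi) j (Finset.mem_of_mem_erase hj)
    intro i hi
    by_cases h : i = cmax
    · rw [h, h1, h2]
    · exact ih _ _ f1 f2 hcard hr1 hd1' hr2 hd2' i (Finset.mem_erase.2 ⟨h, hi⟩)


open Classical in
noncomputable def acols (p : Fin n → Fin n) : Finset (Fin n) :=
  Finset.univ.filter (fun i => Crit p i (p i))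

noncomputable def arows (p : Fin n → Fin n) : Finset (Fin n) := (acols p).image p

lemma mem_acols {p : Fin n → Fin n} {i : Fin n} : i ∈ acols p ↔ Crit p i (p i) := by
  simp [acols]

lemma crit_dc (p : Fin n → Fin n) : DownClosed (Crit p) :=
  fun _ _ _ _ h hi hv => crit_mono h hi hv

lemma pl_self {p : Fin n → Fin n} (hp : Function.Injective p) :
    IsPl (Crit p) (acols p) (arows p) p := by
  refine ⟨fun i hi => Finset.mem_image_of_mem p hi, fun i hi => mem_acols.1 hi,
    fun i _ j _ h => hp h, fun r hr => ?_⟩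
  obtain ⟨i, hi, hpi⟩ := Finset.mem_image.1 hr
  exact ⟨i, hi, hpi⟩

noncomputable def repl (p f : Fin n → Fin n) : Fin n → Fin n :=
  fun i => if i ∈ acols p then f i else p i

section Repl
variable {p f : Fin n → Fin n} (hp : Function.Injective p)
  (hf : IsPl (Crit p) (acols p) (arows p) f)

lemma repl_mem {i : Fin n} (hi : i ∈ acols p) : repl p f i = f i := if_pos hi
lemma repl_nmem {i : Fin n} (hi : i ∉ acols p) : repl p f i = p i := if_neg hi

include hp hf in
lemma repl_inj : Function.Injective (repl p f) := by
  intro a b hab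
  unfold repl at hab
  by_cases ha : a ∈ acols p <;> by_cases hb : b ∈ acols p
  · rw [if_pos ha, if_pos hb] at hab
    exact hf.2.2.1 a ha b hb hab
  · exfalso
    rw [if_pos ha, if_neg hb] at hab
    have : f a ∈ arows p := hf.1 a ha
    obtain ⟨c, hc, hpc⟩ := Finset.mem_image.1 this
    rw [hab] at hpc
    exact hb (by rwa [hp hpc] at hc)
  · exfalso
    rw [if_neg ha, if_pos hb] at hab
    have : f b ∈ arows p := hf.1 b hb
    obtain ⟨c, hc, hpc⟩ := Finset.mem_image.1 this
    rw [← hab] at hpc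
    exact ha (by rwa [hp hpc] at hc)
  · rw [if_neg ha, if_neg hb] at hab
    exact hp hab

include hp hf in
lemma repl_bij : Function.Bijective (repl p f) :=
  Finite.injective_iff_bijective.1 (repl_inj hp hf)

include hf in
lemma crit_repl : ∀ i v : Fin n, Crit (repl p f) i v ↔ Crit p i v := by
  intro i v
  constructor
  · rintro ⟨j1, j2, h1, h2, h3, h4⟩
    by_cases hj1 : j1 ∈ acols p
    · rw [repl_mem hj1] at h3
      exact crit_mono (hf.2.1 j1 hj1) (le_of_lt h1) (le_of_lt h3)
    · by_cases hj2 : j2 ∈ acols p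
      · rw [repl_mem hj2] at h4
        exact crit_mono (hf.2.1 j2 hj2) (le_of_lt (lt_trans h1 h2)) (le_of_lt (lt_trans h3 h4))
      · rw [repl_nmem hj1] at h3 h4
        rw [repl_nmem hj2] at h4
        exact ⟨j1, j2, h1, h2, h3, h4⟩
  · intro h
    obtain ⟨j1, j2, h1, h2, h3, h4, hn1, hn2⟩ := crit_witness h
    refine ⟨j1, j2, h1, h2, ?_, ?_⟩
    · rwa [repl_nmem (fun hc => hn1 (mem_acols.1 hc))]
    · rw [repl_nmem (fun hc => hn1 (mem_acols.1 hc)),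
        repl_nmem (fun hc => hn2 (mem_acols.1 hc))]
      exact h4

include hf in
lemma acols_repl : acols (repl p f) = acols p := by
  ext i
  rw [mem_acols, mem_acols]
  by_cases hi : i ∈ acols p
  · rw [repl_mem hi, crit_repl hf]
    exact iff_of_true (hf.2.1 i hi) (mem_acols.1 hi)
  · rw [repl_nmem hi, crit_repl hf]

include hf in
lemma arows_repl : arows (repl p f) = arows p := by
  unfold arows
  rw [acols_repl hf]
  ext r
  simp only [Finset.mem_image]
  constructor
  · rintro ⟨i, hi, hri⟩
    rw [repl_mem hi] at hri
    obtain ⟨c, hc, hpc⟩ := Finset.mem_image.1 (hf.1 i hi)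
    exact ⟨c, hc, by rw [hpc, hri]⟩
  · rintro ⟨i, hi, hri⟩
    have : p i ∈ arows p := Finset.mem_image_of_mem p hi
    obtain ⟨c, hc, hfc⟩ := hf.2.2.2 _ this
    exact ⟨c, hc, by rw [repl_mem hc, hfc, hri]⟩

end Repl

section Parity
variable {p : Fin n → Fin n}

lemma odd_active_contains (halt : Alternating p) (hp : Function.Injective p)
    {i : Fin n} (hi : Crit p i (p i)) (hodd : i.1 % 2 = 1) :
    Contains p ![0, 1, 2, 3] ∧ Contains p ![1, 0, 2, 3] := by
  obtain ⟨j1, j2, h1, h2, h3, h4⟩ := hi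
  have hi1 : 1 ≤ i.1 := by omega
  have hin : i.1 < n := i.2
  constructor
  · -- use i - 1
    have he : i.1 - 1 + 1 < n := by omega
    have hasc := halt (i.1 - 1) he
    have heq : (⟨i.1 - 1 + 1, he⟩ : Fin n) = i := by
      apply Fin.ext; simp; omega
    rw [heq] at hasc
    have hlt : p ⟨i.1 - 1, by omega⟩ < p i := hasc.2 (by omega)
    refine (contains1234_iff p).2 ⟨⟨i.1 - 1, by omega⟩, i, ?_, hlt, j1, j2, h1, h2, h3, h4⟩
    rw [Fin.lt_def]; simp; omega
  · -- use i + 1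
    have hj1n : i.1 + 1 < n := by
      have := j1.2
      have : i.1 < j1.1 := h1
      omega
    set b : Fin n := ⟨i.1 + 1, hj1n⟩ with hb
    have hdesc := halt i.1 hj1n
    have heqi : (⟨i.1, by omega⟩ : Fin n) = i := Fin.ext rfl
    rw [heqi] at hdesc
    have hne : p b ≠ p i := fun h => by
      have := hp h
      rw [hb] at this
      have : i.1 + 1 = i.1 := congrArg Fin.val this
      omega
    have hblt : p b < p i := by
      rcases lt_or_gt_of_ne hne with h | h
      · exact h
      · exact absurd (hdesc.1 h) (by omega)
    have hbj1 : b < j1 := by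
      rw [Fin.lt_def]
      have h1' : i.1 < j1.1 := h1
      rcases Nat.lt_or_ge (i.1+1) j1.1 with h | h
      · exact h
      · exfalso
        have : b = j1 := Fin.ext (by simp [hb]; omega)
        rw [this] at hblt
        exact absurd (lt_trans hblt h3) (lt_irrefl _)
    exact (contains2134_iff p).2 ⟨i, b, by rw [Fin.lt_def]; simp [hb], hblt,
      j1, j2, hbj1, h2, h3, h4⟩

lemma parity_of_avoids1234 (halt : Alternating p) (hp : Function.Injective p)
    (hav : Avoids p ![0, 1, 2, 3]) {i : Fin n} (hi : Crit p i (p i)) : i.1 % 2 = 0 := by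
  by_contra h
  exact hav (odd_active_contains halt hp hi (by omega)).1

lemma parity_of_avoids2134 (halt : Alternating p) (hp : Function.Injective p)
    (hav : Avoids p ![1, 0, 2, 3]) {i : Fin n} (hi : Crit p i (p i)) : i.1 % 2 = 0 := by
  by_contra h
  exact hav (odd_active_contains halt hp hi (by omega)).2

variable (hpar : ∀ j : Fin n, Crit p j (p j) → j.1 % 2 = 0)

include hpar in
lemma new_lt_right {c r : Fin n} (hc : Crit p c (p c)) (hcr : Crit p c r)
    (h : c.1 + 1 < n) (hne : r ≠ p ⟨c.1 + 1, h⟩) : r < p ⟨c.1 + 1, h⟩ := by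
  set d : Fin n := ⟨c.1 + 1, h⟩ with hd
  rcases lt_or_gt_of_ne hne with hlt | hgt
  · exact hlt
  · exfalso
    obtain ⟨j1, j2, h1, h2, h3, h4⟩ := hcr
    have hdj1 : d < j1 := by
      rw [Fin.lt_def]
      have h1' : c.1 < j1.1 := h1
      rcases Nat.lt_or_ge (c.1+1) j1.1 with hh | hh
      · exact hh
      · exfalso
        have : d = j1 := Fin.ext (by simp [hd]; omega)
        rw [← this] at h3
        exact absurd (lt_trans hgt h3) (lt_irrefl _)
    have hcritd : Crit p d (p d) := ⟨j1, j2, hdj1, h2, lt_trans hgt h3, h4⟩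
    have hpd := hpar d hcritd
    have hpc := hpar c hc
    have hd1 : d.1 = c.1 + 1 := rfl
    omega

include hpar in
lemma new_lt_left {c r : Fin n} (hc : Crit p c (p c)) (hcr : Crit p c r)
    (h : 0 < c.1) (hne : r ≠ p ⟨c.1 - 1, by omega⟩) : r < p ⟨c.1 - 1, by omega⟩ := by
  set e : Fin n := ⟨c.1 - 1, by omega⟩ with he
  rcases lt_or_gt_of_ne hne with hlt | hgt
  · exact hlt
  · exfalso
    obtain ⟨j1, j2, h1, h2, h3, h4⟩ := hcr
    have hej1 : e < j1 := by
      rw [Fin.lt_def]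
      have h1' : c.1 < j1.1 := h1
      simp [he]; omega
    have hcrite : Crit p e (p e) := ⟨j1, j2, hej1, h2, lt_trans hgt h3, h4⟩
    have h1p := hpar e hcrite
    have h2p := hpar c hc
    have he1 : e.1 = c.1 - 1 := rfl
    omega

end Parity

section Alt
variable {p f : Fin n → Fin n}

lemma repl_alternating (hp : Function.Injective p) (halt : Alternating p)
    (hpar : ∀ j : Fin n, Crit p j (p j) → j.1 % 2 = 0)
    (hf : IsPl (Crit p) (acols p) (arows p) f) : Alternating (repl p f) := by
  intro i h
  set a : Fin n := ⟨i, by omega⟩ with ha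
  set b : Fin n := ⟨i + 1, h⟩ with hb
  have hval_a : a.1 = i := rfl
  have hval_b : b.1 = i + 1 := rfl
  have hnewrows : ∀ c ∈ acols p, ∀ j : Fin n, j ∉ acols p → f c ≠ p j := by
    intro c hc j hj hfc
    obtain ⟨x, hx, hpx⟩ := Finset.mem_image.1 (hf.1 c hc)
    rw [← hpx] at hfc
    exact hj (by rwa [hp hfc] at hx)
  by_cases hA : a ∈ acols p <;> by_cases hB : b ∈ acols p
  · exfalso
    have h1 := hpar a (mem_acols.1 hA)
    have h2 := hpar b (mem_acols.1 hB)
    omega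
  · -- a active, b not; i even; f a < p b
    have hieven := hpar a (mem_acols.1 hA)
    rw [repl_mem hA, repl_nmem hB]
    have hfb : f a < p b := by
      have := new_lt_right hpar (mem_acols.1 hA) (hf.2.1 a hA) (show a.1 + 1 < n from h)
        (hnewrows a hA ⟨a.1+1, h⟩ hB)
      exact this
    exact iff_of_true hfb (by omega)
  · -- b active, a not; i odd; f b < p a
    have hbeven := hpar b (mem_acols.1 hB)
    rw [repl_nmem hA, repl_mem hB]
    have hpos : 0 < b.1 := by omega
    have hlt : f b < p a := by
      have := new_lt_left hpar (mem_acols.1 hB) (hf.2.1 b hB) hpos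
        (hnewrows b hB ⟨b.1 - 1, by omega⟩ (by exact hA))
      exact this
    exact iff_of_false (not_lt.2 (le_of_lt hlt)) (by omega)
  · rw [repl_nmem hA, repl_nmem hB]
    exact halt i h

lemma repl_avoids2134 (hf : IsPl (Crit p) (acols p) (arows p) f)
    (hno : No21 (Crit p) (acols p) f) : Avoids (repl p f) ![1, 0, 2, 3] := by
  intro hcon
  obtain ⟨i, j, hij, hlt, hcrit⟩ := (contains2134_iff _).1 hcon
  have hj' : Crit (repl p f) j (repl p f j) := crit_mono hcrit le_rfl (le_of_lt hlt)
  have hi' : Crit (repl p f) i (repl p f i) := crit_mono hcrit (le_of_lt hij) le_rfl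
  have hj : j ∈ acols p := by rw [← acols_repl hf]; exact mem_acols.2 hj'
  have hi : i ∈ acols p := by rw [← acols_repl hf]; exact mem_acols.2 hi'
  rw [repl_mem hi, repl_mem hj] at hlt
  rw [crit_repl hf, repl_mem hi] at hcrit
  exact hno i hi j hj hij hlt hcrit

lemma repl_avoids1234 (hf : IsPl (Crit p) (acols p) (arows p) f)
    (hdec : Decr (acols p) f) : Avoids (repl p f) ![0, 1, 2, 3] := by
  intro hcon
  obtain ⟨i, j, hij, hlt, hcrit⟩ := (contains1234_iff _).1 hcon
  have hi' : Crit (repl p f) i (repl p f i) := crit_mono hcrit (le_of_lt hij) (le_of_lt hlt)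
  have hj : j ∈ acols p := by rw [← acols_repl hf]; exact mem_acols.2 hcrit
  have hi : i ∈ acols p := by rw [← acols_repl hf]; exact mem_acols.2 hi'
  rw [repl_mem hi, repl_mem hj] at hlt
  exact absurd hlt (not_lt.2 (le_of_lt (hdec i hi j hj hij)))

lemma avoid1234_decr (hp : Function.Injective p) (hav : Avoids p ![0, 1, 2, 3]) :
    Decr (acols p) p := by
  intro i hi j hj hij
  rcases lt_trichotomy (p j) (p i) with h | h | h
  · exact h
  · exact absurd (hp h) (ne_of_gt hij)
  · exact absurd ((contains1234_iff p).2 ⟨i, j, hij, h, mem_acols.1 hj⟩) hav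

lemma avoid2134_no21 (hav : Avoids p ![1, 0, 2, 3]) :
    No21 (Crit p) (acols p) p := by
  intro i hi j hj hij hlt hcrit
  exact hav ((contains2134_iff p).2 ⟨i, j, hij, hlt, hcrit⟩)

end Alt

section Maps
variable {p q : Fin n → Fin n}

lemma phi_ex (hp : Function.Injective p) :
    ∃ f, IsPl (Crit p) (acols p) (arows p) f ∧ No21 (Crit p) (acols p) f :=
  exists_no21 (crit_dc p) (acols p).card (acols p) (arows p) p rfl (pl_self hp)

lemma psi_ex (hq : Function.Injective q) :
    ∃ f, IsPl (Crit q) (acols q) (arows q) f ∧ Decr (acols q) f :=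
  exists_decr (crit_dc q) (acols q).card (acols q) (arows q) q rfl (pl_self hq)

open Classical in
noncomputable def phi (p : Fin n → Fin n) : Fin n → Fin n :=
  if h : ∃ f, IsPl (Crit p) (acols p) (arows p) f ∧ No21 (Crit p) (acols p) f then
    repl p h.choose else p

open Classical in
noncomputable def psi (q : Fin n → Fin n) : Fin n → Fin n :=
  if h : ∃ f, IsPl (Crit q) (acols q) (arows q) f ∧ Decr (acols q) f then
    repl q h.choose else q

lemma phi_def (hp : Function.Injective p) : phi p = repl p (phi_ex hp).choose := by
  rw [phi]
  rw [dif_pos (phi_ex hp)]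

lemma psi_def (hq : Function.Injective q) : psi q = repl q (psi_ex hq).choose := by
  rw [psi, dif_pos (psi_ex hq)]

lemma phi_bij (hp : Function.Bijective p) : Function.Bijective (phi p) := by
  rw [phi_def hp.1]
  exact repl_bij hp.1 (phi_ex hp.1).choose_spec.1

lemma psi_bij (hq : Function.Bijective q) : Function.Bijective (psi q) := by
  rw [psi_def hq.1]
  exact repl_bij hq.1 (psi_ex hq.1).choose_spec.1

lemma phi_alt (hp : Function.Bijective p) (halt : Alternating p)
    (hav : Avoids p ![0, 1, 2, 3]) : Alternating (phi p) := by
  rw [phi_def hp.1]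
  exact repl_alternating hp.1 halt (fun j hj => parity_of_avoids1234 halt hp.1 hav hj)
    (phi_ex hp.1).choose_spec.1

lemma psi_alt (hq : Function.Bijective q) (halt : Alternating q)
    (hav : Avoids q ![1, 0, 2, 3]) : Alternating (psi q) := by
  rw [psi_def hq.1]
  exact repl_alternating hq.1 halt (fun j hj => parity_of_avoids2134 halt hq.1 hav hj)
    (psi_ex hq.1).choose_spec.1

lemma phi_avoids (hp : Function.Bijective p) : Avoids (phi p) ![1, 0, 2, 3] := by
  rw [phi_def hp.1]
  exact repl_avoids2134 (phi_ex hp.1).choose_spec.1 (phi_ex hp.1).choose_spec.2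

lemma psi_avoids (hq : Function.Bijective q) : Avoids (psi q) ![0, 1, 2, 3] := by
  rw [psi_def hq.1]
  exact repl_avoids1234 (psi_ex hq.1).choose_spec.1 (psi_ex hq.1).choose_spec.2

lemma pl_transfer {B1 B2 : Fin n → Fin n → Prop} {cols1 cols2 rows1 rows2 : Finset (Fin n)}
    {f : Fin n → Fin n} (hB : ∀ i v, B1 i v ↔ B2 i v) (hc : cols1 = cols2)
    (hr : rows1 = rows2) (h : IsPl B1 cols1 rows1 f) : IsPl B2 cols2 rows2 f := by
  subst hc; subst hr
  exact ⟨h.1, fun i hi => (hB i (f i)).1 (h.2.1 i hi), h.2.2.1, h.2.2.2⟩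

set_option maxHeartbeats 2000000 in
lemma psi_phi (hp : Function.Bijective p) (halt : Alternating p)
    (hav : Avoids p ![0, 1, 2, 3]) : psi (phi p) = p := by
  have hinj := hp.1
  set f := (phi_ex hinj).choose with hfdef
  obtain ⟨hfpl, hfno⟩ := (phi_ex hinj).choose_spec
  have hphi : phi p = repl p f := phi_def hinj
  have hqinj : Function.Injective (phi p) := (phi_bij hp).1
  set g := (psi_ex hqinj).choose with hgdef
  obtain ⟨hgpl, hgdec⟩ := (psi_ex hqinj).choose_spec
  have hpsi : psi (phi p) = repl (phi p) g := psi_def hqinj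
  have hac : acols (phi p) = acols p := by rw [hphi]; exact acols_repl hfpl
  have har : arows (phi p) = arows p := by rw [hphi]; exact arows_repl hfpl
  have hcr : ∀ i v, Crit (phi p) i v ↔ Crit p i v := by
    rw [hphi]; exact crit_repl hfpl
  have hgpl' : IsPl (Crit p) (acols p) (arows p) g := pl_transfer hcr hac har hgpl
  have hgdec' : Decr (acols p) g := by rw [← hac]; exact hgdec
  have hppl : IsPl (Crit p) (acols p) (arows p) p := pl_self hinj
  have hpdec : Decr (acols p) p := avoid1234_decr hinj hav
  have hagree : ∀ i ∈ acols p, g i = p i :=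
    decr_unique (acols p).card (acols p) (arows p) g p rfl hgpl' hgdec' hppl hpdec
  funext i
  rw [hpsi]
  by_cases hi : i ∈ acols (phi p)
  · rw [repl_mem hi]
    exact hagree i (by rwa [← hac])
  · rw [repl_nmem hi, hphi, repl_nmem (by rwa [hac] at hi)]

set_option maxHeartbeats 2000000 in
lemma phi_psi (hq : Function.Bijective q) (halt : Alternating q)
    (hav : Avoids q ![1, 0, 2, 3]) : phi (psi q) = q := by
  have hinj := hq.1
  set g := (psi_ex hinj).choose with hgdef
  obtain ⟨hgpl, hgdec⟩ := (psi_ex hinj).choose_spec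
  have hpsi : psi q = repl q g := psi_def hinj
  have hpinj : Function.Injective (psi q) := (psi_bij hq).1
  set f := (phi_ex hpinj).choose with hfdef
  obtain ⟨hfpl, hfno⟩ := (phi_ex hpinj).choose_spec
  have hphi : phi (psi q) = repl (psi q) f := phi_def hpinj
  have hac : acols (psi q) = acols q := by rw [hpsi]; exact acols_repl hgpl
  have har : arows (psi q) = arows q := by rw [hpsi]; exact arows_repl hgpl
  have hcr : ∀ i v, Crit (psi q) i v ↔ Crit q i v := by
    rw [hpsi]; exact crit_repl hgpl
  have hfpl' : IsPl (Crit q) (acols q) (arows q) f := pl_transfer hcr hac har hfpl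
  have hfno' : No21 (Crit q) (acols q) f := by
    intro i hi j hj hij hlt hB
    exact hfno i (by rwa [hac]) j (by rwa [hac]) hij hlt ((hcr j (f i)).2 hB)
  have hqpl : IsPl (Crit q) (acols q) (arows q) q := pl_self hinj
  have hqno : No21 (Crit q) (acols q) q := avoid2134_no21 hav
  have hagree : ∀ i ∈ acols q, f i = q i :=
    no21_unique (acols q).card (acols q) (arows q) f q rfl hfpl' hfno' hqpl hqno
  funext i
  rw [hphi]
  by_cases hi : i ∈ acols (psi q)
  · rw [repl_mem hi]
    exact hagree i (by rwa [← hac])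
  · rw [repl_nmem hi, hpsi, repl_nmem (by rwa [hac] at hi)]

end Maps

end Lew

theorem stmt15 (n : ℕ) (hn : 0 < n) :
    Nat.card {p : Fin n → Fin n // Function.Bijective p ∧ Alternating p ∧
      Avoids p (![0, 1, 2, 3] : Fin 4 → Fin 4)} =
    Nat.card {p : Fin n → Fin n // Function.Bijective p ∧ Alternating p ∧
      Avoids p (![1, 0, 2, 3] : Fin 4 → Fin 4)} := by
  refine Nat.card_congr ⟨?_, ?_, ?_, ?_⟩
  · rintro ⟨p, hb, ha, hv⟩
    exact ⟨Lew.phi p, Lew.phi_bij hb, Lew.phi_alt hb ha hv, Lew.phi_avoids hb⟩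
  · rintro ⟨q, hb, ha, hv⟩
    exact ⟨Lew.psi q, Lew.psi_bij hb, Lew.psi_alt hb ha hv, Lew.psi_avoids hb⟩
  · rintro ⟨p, hb, ha, hv⟩
    exact Subtype.ext (Lew.psi_phi hb ha hv)
  · rintro ⟨q, hb, ha, hv⟩
    exact Subtype.ext (Lew.phi_psi hb ha hv)
end
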